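/- arXiv:1311.2177 — 9 statements merged into one kernel-verified Lean document; each statement's English description precedes it below -/
import Mathlib

section
/- A nontrivial real Banach space X has the local diameter 2 property if and only if X** has the weak* local diameter 2 property; X has the diameter 2 property if and only if X** has the weak* diameter 2 property; and X has the strong diameter 2 property if and only if X** has the weak* strong diameter 2 property (where in each case the weak* property of X** is taken with respect to the predual X*). -/
open Metric Set

set_option linter.unusedSectionVars false
noncomputable section

section AuxDiam
variable {Y : Type*} [SeminormedAddCommGroup Y] [NormedSpace ℝ Y]

lemma aux_diam_le_two {S : Set Y} (h : ∀ a ∈ S, ‖a‖ ≤ 1) : Metric.diam S ≤ 2 :=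
  Metric.diam_le_of_forall_dist_le (by norm_num) (fun a ha b hb => by
    rw [dist_eq_norm]
    calc ‖a - b‖ ≤ ‖a‖ + ‖b‖ := norm_sub_le a b
    _ ≤ 2 := by linarith [h a ha, h b hb])

lemma aux_bounded {S : Set Y} (h : ∀ a ∈ S, ‖a‖ ≤ 1) : Bornology.IsBounded S :=
  (Metric.isBounded_closedBall (x := (0:Y)) (r := 1)).subset
    (fun y hy => by simpa [Metric.mem_closedBall, dist_zero_right] using h y hy)

lemma aux_diam_eq_two {S : Set Y} (h : ∀ a ∈ S, ‖a‖ ≤ 1)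
    (h2 : ∀ ε : ℝ, 0 < ε → ε ≤ 1 → ∃ a ∈ S, ∃ b ∈ S, 2 - ε ≤ dist a b) :
    Metric.diam S = 2 := by
  refine le_antisymm (aux_diam_le_two h) ?_
  refine le_of_forall_pos_le_add fun ε hε => ?_
  obtain ⟨a, ha, b, hb, hab⟩ := h2 (min ε 1) (lt_min hε one_pos) (min_le_right _ _)
  have := Metric.dist_le_diam_of_mem (aux_bounded h) ha hb
  have := min_le_left ε 1
  linarith

lemma aux_exists_pair {S : Set Y} (hd : Metric.diam S = 2) {ε : ℝ} (hε : 0 < ε) (hε1 : ε ≤ 1) :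
    ∃ a ∈ S, ∃ b ∈ S, 2 - ε < dist a b := by
  by_contra hcon
  push_neg at hcon
  have : Metric.diam S ≤ 2 - ε :=
    Metric.diam_le_of_forall_dist_le (by linarith) (fun a ha b hb => hcon a ha b hb)
  linarith

lemma aux_norming {T : Y →L[ℝ] ℝ} {r : ℝ} (hr : r < ‖T‖) : ∃ h : Y, ‖h‖ ≤ 1 ∧ r < T h := by
  by_contra hcon
  push_neg at hcon
  have h0 : (0:ℝ) ≤ r := by simpa using hcon 0 (by simp)
  have : ‖T‖ ≤ r := by
    refine ContinuousLinearMap.opNorm_le_of_unit_norm h0 (fun x hx => ?_)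
    have h1 := hcon x (le_of_eq hx)
    have h2 := hcon (-x) (by simp [hx])
    rw [map_neg] at h2
    rw [Real.norm_eq_abs, abs_le]
    constructor <;> linarith
  linarith

lemma aux_dist_ge {h : Y →L[ℝ] ℝ} (hh : ‖h‖ ≤ 1) (a b : Y) : h a - h b ≤ dist a b := by
  rw [dist_eq_norm]
  calc h a - h b = h (a - b) := by rw [map_sub]
  _ ≤ |h (a-b)| := le_abs_self _
  _ ≤ ‖h‖ * ‖a - b‖ := h.le_opNorm _
  _ ≤ 1 * ‖a - b‖ := by
      have : (0:ℝ) ≤ ‖a - b‖ := norm_nonneg _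
      nlinarith
  _ = ‖a - b‖ := one_mul _

end AuxDiam

section WeakBasic
variable {E F : Type*} [AddCommGroup E] [Module ℝ E] [AddCommGroup F] [Module ℝ F]

lemma aux_weak_basic (B : E →ₗ[ℝ] F →ₗ[ℝ] ℝ) {U : Set (WeakBilin B)} (hU : IsOpen U)
    {x : WeakBilin B} (hx : x ∈ U) :
    ∃ (s : Finset F) (ε : F → ℝ), (∀ f ∈ s, 0 < ε f) ∧
      {y : WeakBilin B | ∀ f ∈ s, |B y f - B x f| < ε f} ⊆ U := by
  classical
  obtain ⟨V, hV, rfl⟩ := isOpen_induced_iff.mp hU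
  obtain ⟨I, u, hu, hsub⟩ := isOpen_pi_iff.mp hV _ hx
  choose ε hε hball using fun f (hf : f ∈ I) =>
    Metric.isOpen_iff.mp (hu f hf).1 _ (hu f hf).2
  refine ⟨I, fun f => if hf : f ∈ I then ε f hf else 1,
    fun f hf => by simp [hf, hε], ?_⟩
  intro y hy
  show (fun g => B y g) ∈ V
  apply hsub
  intro f hf
  apply hball f hf
  rw [Metric.mem_ball, Real.dist_eq]
  have hf' : f ∈ I := hf
  have := hy f hf'
  simp only [dif_pos hf'] at this
  exact this

end WeakBasic

section Goldstine
variable {X : Type*} [NormedAddCommGroup X] [NormedSpace ℝ X]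
open NormedSpace

lemma goldstine (F : StrongDual ℝ (StrongDual ℝ X)) (hF : ‖F‖ ≤ 1)
    {ι : Type*} [Fintype ι] (f : ι → StrongDual ℝ X) (δ : ι → ℝ) (hδ : ∀ i, 0 < δ i) :
    ∃ x : X, ‖x‖ ≤ 1 ∧ ∀ i, |f i x - F (f i)| < δ i := by
  classical
  set T : X → (ι → ℝ) := fun x i => f i x with hT
  set K : Set (ι → ℝ) := T '' Metric.closedBall 0 1 with hK
  set c : ι → ℝ := fun i => F (f i) with hc
  have hcK : c ∈ closure K := by
    by_contra hcon
    have hKconv : Convex ℝ (closure K) := by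
      refine Convex.closure ?_
      refine (convex_closedBall (0:X) 1).is_linear_image ?_
      exact ⟨fun a b => by funext i; simp [hT], fun r a => by funext i; simp [hT]⟩
    obtain ⟨ℓ, u, hu, hcu⟩ := geometric_hahn_banach_closed_point hKconv isClosed_closure hcon
    have hu' : ∀ z ∈ K, ℓ z < u := fun z hz => hu z (subset_closure hz)
    set g : X →L[ℝ] ℝ := ℓ.comp (ContinuousLinearMap.pi (fun i => (f i : X →L[ℝ] ℝ))) with hg
    have hgx : ∀ x : X, g x = ℓ (T x) := fun x => rfl
    have hu0 : 0 < u := by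
      have h0 : T 0 ∈ K := ⟨0, by simp, rfl⟩
      have : ℓ (T 0) < u := hu' _ h0
      have hT0 : T 0 = 0 := by funext i; simp [hT]
      rw [hT0, map_zero] at this
      exact this
    have hTneg : ∀ x : X, T (-x) = -(T x) := fun x => by funext i; simp [hT]
    have hgnorm : ‖g‖ ≤ u := by
      refine ContinuousLinearMap.opNorm_le_of_unit_norm hu0.le (fun x hx => ?_)
      have hmem : ∀ z : X, ‖z‖ ≤ 1 → ℓ (T z) < u := fun z hz =>
        hu' _ ⟨z, by simpa [Metric.mem_closedBall, dist_zero_right] using hz, rfl⟩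
      have h1 := hmem x hx.le
      have h2 := hmem (-x) (by simp [hx])
      rw [hTneg, map_neg] at h2
      rw [hgx, Real.norm_eq_abs, abs_le]
      constructor <;> linarith
    have hl : ∀ v : ι → ℝ, ℓ v = ∑ i, v i * ℓ (Pi.single i 1) := by
      intro v
      have hv : (∑ i, v i • (Pi.single i (1:ℝ) : ι → ℝ)) = v := by
        funext j
        simp [Finset.sum_apply, Pi.single_apply, Finset.sum_ite_eq']
      calc ℓ v = ℓ (∑ i, v i • (Pi.single i (1:ℝ) : ι → ℝ)) := by rw [hv]
      _ = ∑ i, v i * ℓ (Pi.single i 1) := by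
          rw [map_sum]; simp [smul_eq_mul]
    have hg_eq : g = ∑ i, ℓ (Pi.single i 1) • (f i : X →L[ℝ] ℝ) := by
      ext x
      rw [hgx, hl (T x)]
      simp [ContinuousLinearMap.sum_apply, hT, mul_comm]
    have hFg : F g = ℓ c := by
      rw [hg_eq, map_sum, hl c]
      simp [hc, mul_comm]
    have hFgle : F g ≤ u := by
      calc F g ≤ |F g| := le_abs_self _
      _ ≤ ‖F‖ * ‖g‖ := F.le_opNorm g
      _ ≤ 1 * u := by
          have := norm_nonneg g
          nlinarith
      _ = u := one_mul u
    rw [hFg] at hFgle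
    linarith
  have hopen : IsOpen {y : ι → ℝ | ∀ i, |y i - c i| < δ i} := by
    have heq : {y : ι → ℝ | ∀ i, |y i - c i| < δ i}
        = ⋂ i, (fun y : ι → ℝ => y i) ⁻¹' Metric.ball (c i) (δ i) := by
      ext y; simp [Real.dist_eq]
    rw [heq]
    exact isOpen_iInter_of_finite fun i => Metric.isOpen_ball.preimage (continuous_apply i)
  obtain ⟨y, hy1, hy2⟩ := (_root_.mem_closure_iff.mp hcK) _ hopen (fun i => by simp [hδ i])
  obtain ⟨x, hx, rfl⟩ := hy2
  exact ⟨x, by simpa [Metric.mem_closedBall, dist_zero_right] using hx, fun i => hy1 i⟩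

/-- The canonical embedding of `X` into its bidual, as a linear isometry. -/
noncomputable def auxJ (X : Type*) [NormedAddCommGroup X] [NormedSpace ℝ X] :
    X →ₗᵢ[ℝ] StrongDual ℝ (StrongDual ℝ X) := inclusionInDoubleDualLi ℝ

lemma auxJ_apply (x : X) (f : StrongDual ℝ X) : auxJ X x f = f x := rfl

lemma auxJ_norm (x : X) : ‖auxJ X x‖ = ‖x‖ := (auxJ X).norm_map x

lemma aux_ge_via_image {S : Set X} {T : Set (StrongDual ℝ (StrongDual ℝ X))}
    (hT : ∀ a ∈ T, ‖a‖ ≤ 1) (hsub : ∀ x ∈ S, auxJ X x ∈ T)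
    (hS : Metric.diam S = 2) : Metric.diam T = 2 := by
  refine le_antisymm (aux_diam_le_two (Y := StrongDual ℝ (StrongDual ℝ X)) hT) ?_
  calc (2:ℝ) = Metric.diam ((auxJ X) '' S) := by
        rw [Isometry.diam_image ((auxJ X).isometry) S, hS]
  _ ≤ Metric.diam T := Metric.diam_mono (by rintro _ ⟨x, hx, rfl⟩; exact hsub x hx)
      (aux_bounded hT)

lemma aux_approx2 (F : StrongDual ℝ (StrongDual ℝ X)) (hF : ‖F‖ ≤ 1) (p q : StrongDual ℝ X)
    {a b : ℝ} (ha : 0 < a) (hb : 0 < b) :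
    ∃ x : X, ‖x‖ ≤ 1 ∧ |p x - F p| < a ∧ |q x - F q| < b := by
  obtain ⟨x, hx, h⟩ := goldstine F hF (fun i : Bool => if i then p else q)
    (fun i => if i then a else b) (by intro i; cases i <;> simp [ha, hb])
  exact ⟨x, hx, by simpa using h true, by simpa using h false⟩

end Goldstine

/-- A slice of the closed unit ball determined by `f ∈ S_{X*}` and `α > 0` is
`{x ∈ B_X : f x > 1 - α}`.  `X` has the local diameter 2 property if every slice
of `B_X` has diameter 2. -/
def LocalDiameterTwoProp (X : Type*) [NormedAddCommGroup X] [NormedSpace ℝ X] : Prop :=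
  ∀ f : X →L[ℝ] ℝ, ‖f‖ = 1 → ∀ α : ℝ, 0 < α →
    Metric.diam {x : X | ‖x‖ ≤ 1 ∧ 1 - α < f x} = 2

/-- `X` has the diameter 2 property if every nonempty relatively weakly open
subset of `B_X` has diameter 2. -/
def DiameterTwoProp (X : Type*) [NormedAddCommGroup X] [NormedSpace ℝ X] : Prop :=
  ∀ U : Set (WeakSpace ℝ X), IsOpen U →
    {x : X | ‖x‖ ≤ 1 ∧ toWeakSpace ℝ X x ∈ U}.Nonempty →
    Metric.diam {x : X | ‖x‖ ≤ 1 ∧ toWeakSpace ℝ X x ∈ U} = 2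

/-- `X` has the strong diameter 2 property if every convex combination of slices
of `B_X` has diameter 2. -/
def StrongDiameterTwoProp (X : Type*) [NormedAddCommGroup X] [NormedSpace ℝ X] : Prop :=
  ∀ (n : ℕ) (lam : Fin n → ℝ) (f : Fin n → X →L[ℝ] ℝ) (α : Fin n → ℝ),
    (∀ i, 0 ≤ lam i) → (∑ i, lam i) = 1 → (∀ i, ‖f i‖ = 1) → (∀ i, 0 < α i) →
    Metric.diam {x : X | ∃ g : Fin n → X,
      (∀ i, ‖g i‖ ≤ 1 ∧ 1 - α i < f i (g i)) ∧ x = ∑ i, lam i • g i} = 2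

/-- The dual of `X` has the weak* local diameter 2 property if every weak* slice
`{f ∈ B_{X*} : f x > 1 - α}` (with `x ∈ S_X`, `α > 0`) has diameter 2. -/
def WStarLocalDiameterTwoProp (X : Type*) [NormedAddCommGroup X] [NormedSpace ℝ X] : Prop :=
  ∀ x : X, ‖x‖ = 1 → ∀ α : ℝ, 0 < α →
    Metric.diam {f : X →L[ℝ] ℝ | ‖f‖ ≤ 1 ∧ 1 - α < f x} = 2

/-- The dual of `X` has the weak* diameter 2 property if every nonempty relatively
weak* open subset of `B_{X*}` has diameter 2. -/
def WStarDiameterTwoProp (X : Type*) [NormedAddCommGroup X] [NormedSpace ℝ X] : Prop :=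
  ∀ U : Set (WeakDual ℝ X), IsOpen U →
    {f : X →L[ℝ] ℝ | ‖f‖ ≤ 1 ∧ StrongDual.toWeakDual f ∈ U}.Nonempty →
    Metric.diam {f : X →L[ℝ] ℝ | ‖f‖ ≤ 1 ∧ StrongDual.toWeakDual f ∈ U} = 2

/-- The dual of `X` has the weak* strong diameter 2 property if every convex
combination of weak* slices of `B_{X*}` has diameter 2. -/
def WStarStrongDiameterTwoProp (X : Type*) [NormedAddCommGroup X] [NormedSpace ℝ X] : Prop :=
  ∀ (n : ℕ) (lam : Fin n → ℝ) (x : Fin n → X) (α : Fin n → ℝ),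
    (∀ i, 0 ≤ lam i) → (∑ i, lam i) = 1 → (∀ i, ‖x i‖ = 1) → (∀ i, 0 < α i) →
    Metric.diam {f : X →L[ℝ] ℝ | ∃ g : Fin n → (X →L[ℝ] ℝ),
      (∀ i, ‖g i‖ ≤ 1 ∧ 1 - α i < g i (x i)) ∧ f = ∑ i, lam i • g i} = 2

/-- `X` is locally octahedral. -/
def LocallyOctahedral (X : Type*) [NormedAddCommGroup X] [NormedSpace ℝ X] : Prop :=
  ∀ x : X, ∀ ε : ℝ, 0 < ε → ∃ y : X, ‖y‖ = 1 ∧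
    ∀ s : ℝ, (1 - ε) * (|s| * ‖x‖ + ‖y‖) ≤ ‖s • x + y‖

/-- `X` is weakly octahedral. -/
def WeaklyOctahedral (X : Type*) [NormedAddCommGroup X] [NormedSpace ℝ X] : Prop :=
  ∀ E : Subspace ℝ X, FiniteDimensional ℝ E → ∀ f : X →L[ℝ] ℝ, ‖f‖ ≤ 1 →
    ∀ ε : ℝ, 0 < ε → ∃ y : X, ‖y‖ = 1 ∧
      ∀ x ∈ E, (1 - ε) * (|f x| + ‖y‖) ≤ ‖x + y‖

/-- The norm on `X` is octahedral. -/
def Octahedral (X : Type*) [NormedAddCommGroup X] [NormedSpace ℝ X] : Prop :=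
  ∀ E : Subspace ℝ X, FiniteDimensional ℝ E → ∀ ε : ℝ, 0 < ε →
    ∃ y : X, ‖y‖ = 1 ∧ ∀ x ∈ E, (1 - ε) * (‖x‖ + ‖y‖) ≤ ‖x + y‖



section Directions
open NormedSpace
variable {X : Type*} [NormedAddCommGroup X] [NormedSpace ℝ X]

lemma ld2p_fwd (h : LocalDiameterTwoProp X) : WStarLocalDiameterTwoProp (StrongDual ℝ X) := by
  intro f hf α hα
  refine aux_ge_via_image (X := X) ?_ ?_ (h f hf α hα)
  · exact fun a ha => ha.1
  · rintro x ⟨hx1, hx2⟩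
    refine ⟨?_, ?_⟩
    · rw [auxJ_norm]; exact hx1
    · rw [auxJ_apply]; exact hx2

lemma ld2p_bwd (h : WStarLocalDiameterTwoProp (StrongDual ℝ X)) : LocalDiameterTwoProp X := by
  intro f hf α hα
  refine aux_diam_eq_two (fun a ha => ha.1) ?_
  intro ε hε hε1
  have hd := h f hf α hα
  obtain ⟨F, hF, G, hG, hFG⟩ :=
    aux_exists_pair hd (half_pos hε) (by linarith)
  rw [dist_eq_norm] at hFG
  obtain ⟨p, hp, hpFG⟩ := aux_norming hFG
  rw [ContinuousLinearMap.sub_apply] at hpFG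
  obtain ⟨x, hx1, hx2, hx3⟩ := aux_approx2 (X := X) F hF.1 f p
    (a := F f - (1 - α)) (b := ε/8) (by linarith [hF.2]) (by linarith)
  obtain ⟨y, hy1, hy2, hy3⟩ := aux_approx2 (X := X) G hG.1 f p
    (a := G f - (1 - α)) (b := ε/8) (by linarith [hG.2]) (by linarith)
  rw [abs_lt] at hx2 hx3 hy2 hy3
  refine ⟨x, ⟨hx1, by linarith [hx2.1]⟩, y, ⟨hy1, by linarith [hy2.1]⟩, ?_⟩
  have := aux_dist_ge hp x y
  linarith [hx3.1, hx3.2, hy3.1, hy3.2]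


lemma d2p_fwd (h : DiameterTwoProp X) : WStarDiameterTwoProp (StrongDual ℝ X) := by
  rintro U hU ⟨F0, hF0n, hF0U⟩
  obtain ⟨s, ε, hε, hsub⟩ := aux_weak_basic (topDualPairing ℝ (StrongDual ℝ X)) hU hF0U
  obtain ⟨x0, hx0, hx0apx⟩ := goldstine (X := X) F0 hF0n (ι := ↥s)
    (fun i => (i : StrongDual ℝ X)) (fun i => ε i) (fun i => hε i i.2)
  set W : Set (WeakSpace ℝ X) :=
    {z | ∀ f ∈ s, |(topDualPairing ℝ X).flip z f - F0 f| < ε f} with hWdef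
  have hWopen : IsOpen W := by
    have heq : W = ⋂ f ∈ s,
        (fun z : WeakSpace ℝ X => (topDualPairing ℝ X).flip z f) ⁻¹'
          Metric.ball (F0 f) (ε f) := by
      ext z
      simp [hWdef, Real.dist_eq]
    rw [heq]
    exact isOpen_biInter_finset fun f _ =>
      Metric.isOpen_ball.preimage (WeakBilin.eval_continuous _ f)
  have hmem : toWeakSpace ℝ X x0 ∈ W := by
    intro f hf
    exact hx0apx ⟨f, hf⟩
  have hd := h W hWopen ⟨x0, hx0, hmem⟩
  refine aux_ge_via_image (X := X) (fun a ha => ha.1) ?_ hd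
  rintro x ⟨hx1, hx2⟩
  refine ⟨by rw [auxJ_norm]; exact hx1, ?_⟩
  apply hsub
  intro f hf
  exact hx2 f hf

lemma d2p_bwd (h : WStarDiameterTwoProp (StrongDual ℝ X)) : DiameterTwoProp X := by
  rintro U hU ⟨x0, hx0n, hx0U⟩
  obtain ⟨s, ε, hε, hsub⟩ := aux_weak_basic ((topDualPairing ℝ X).flip) hU hx0U
  set U' : Set (WeakDual ℝ (StrongDual ℝ X)) := {G | ∀ f ∈ s, |G f - f x0| < ε f} with hU'def
  have hU'open : IsOpen U' := by
    have heq : U' = ⋂ f ∈ s,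
        (fun G : WeakDual ℝ (StrongDual ℝ X) => G f) ⁻¹' Metric.ball (f x0) (ε f) := by
      ext G
      simp [hU'def, Real.dist_eq]
    rw [heq]
    exact isOpen_biInter_finset fun f _ =>
      Metric.isOpen_ball.preimage (WeakDual.eval_continuous f)
  have hne : StrongDual.toWeakDual (auxJ X x0) ∈ U' := by
    intro f hf
    show |f x0 - f x0| < ε f
    simpa using hε f hf
  have hd := h U' hU'open ⟨auxJ X x0, by rw [auxJ_norm]; exact hx0n, hne⟩
  refine aux_diam_eq_two (fun a ha => ha.1) ?_
  intro ε' hε' hε1'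
  obtain ⟨F, hF, G, hG, hFG⟩ := aux_exists_pair hd (half_pos hε') (by linarith)
  rw [dist_eq_norm] at hFG
  obtain ⟨p, hp, hpFG⟩ := aux_norming hFG
  rw [ContinuousLinearMap.sub_apply] at hpFG
  have happrox : ∀ H : StrongDual ℝ (StrongDual ℝ X), ‖H‖ ≤ 1 →
      (∀ f ∈ s, |H f - f x0| < ε f) →
      ∃ z : X, ‖z‖ ≤ 1 ∧ (toWeakSpace ℝ X z ∈ U) ∧ |p z - H p| < ε'/8 := by
    intro H hH1 hH2
    obtain ⟨z, hz1, hz2⟩ := goldstine (X := X) H hH1 (ι := Option ↥s)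
      (fun o => o.elim p (fun i => (i : StrongDual ℝ X)))
      (fun o => o.elim (ε'/8) (fun i => ε i - |H i - (i : StrongDual ℝ X) x0|))
      (by
        rintro (_ | i)
        · simpa using by linarith
        · simpa using hH2 i i.2)
    refine ⟨z, hz1, ?_, by simpa using hz2 none⟩
    apply hsub
    intro f hf
    have h1 := hz2 (some ⟨f, hf⟩)
    simp only [Option.elim] at h1
    have h2 : |f z - f x0| ≤ |f z - H f| + |H f - f x0| := abs_sub_le _ _ _
    show |f z - f x0| < ε f
    linarith [abs_nonneg (H f - f x0)]
  obtain ⟨x, hx1, hx2, hx3⟩ := happrox F hF.1 hF.2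
  obtain ⟨y, hy1, hy2, hy3⟩ := happrox G hG.1 hG.2
  rw [abs_lt] at hx3 hy3
  refine ⟨x, ⟨hx1, hx2⟩, y, ⟨hy1, hy2⟩, ?_⟩
  have := aux_dist_ge hp x y
  linarith [hx3.1, hx3.2, hy3.1, hy3.2]


lemma aux_comb_norm {n : ℕ} {lam : Fin n → ℝ} (hlam : ∀ i, 0 ≤ lam i)
    (hsum : (∑ i, lam i) = 1) {Y : Type*} [SeminormedAddCommGroup Y] [NormedSpace ℝ Y]
    (g : Fin n → Y) (hg : ∀ i, ‖g i‖ ≤ 1) : ‖∑ i, lam i • g i‖ ≤ 1 := by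
  calc ‖∑ i, lam i • g i‖ ≤ ∑ i, ‖lam i • g i‖ := norm_sum_le _ _
  _ = ∑ i, lam i * ‖g i‖ := by
      refine Finset.sum_congr rfl fun i _ => ?_
      rw [norm_smul, Real.norm_eq_abs, abs_of_nonneg (hlam i)]
  _ ≤ ∑ i, lam i * 1 :=
      Finset.sum_le_sum fun i _ => mul_le_mul_of_nonneg_left (hg i) (hlam i)
  _ = 1 := by simpa using hsum

lemma sd2p_fwd (h : StrongDiameterTwoProp X) : WStarStrongDiameterTwoProp (StrongDual ℝ X) := by
  intro n lam x α hlam hsum hx hα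
  refine aux_ge_via_image (X := X) ?_ ?_ (h n lam x α hlam hsum hx hα)
  · rintro a ⟨g, hg, rfl⟩
    exact aux_comb_norm hlam hsum g (fun i => (hg i).1)
  · rintro z ⟨g, hg, rfl⟩
    refine ⟨fun i => auxJ X (g i), fun i => ⟨by rw [auxJ_norm]; exact (hg i).1, (hg i).2⟩, ?_⟩
    show auxJ X (∑ i, lam i • g i) = ∑ i, lam i • auxJ X (g i)
    rw [show auxJ X (∑ i, lam i • g i) = ∑ i, auxJ X (lam i • g i) from map_sum (auxJ X).toLinearMap _ _]
    exact Finset.sum_congr rfl fun i _ => (auxJ X).map_smul _ _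

lemma sd2p_bwd (h : WStarStrongDiameterTwoProp (StrongDual ℝ X)) : StrongDiameterTwoProp X := by
  intro n lam f α hlam hsum hf hα
  refine aux_diam_eq_two ?_ ?_
  · rintro a ⟨g, hg, rfl⟩
    exact aux_comb_norm hlam hsum g (fun i => (hg i).1)
  intro ε hε hε1
  have hd := h n lam f α hlam hsum hf hα
  obtain ⟨F, hF, G, hG, hFG⟩ := aux_exists_pair hd (half_pos hε) (by linarith)
  rw [dist_eq_norm] at hFG
  obtain ⟨p, hp, hpFG⟩ := aux_norming hFG
  rw [ContinuousLinearMap.sub_apply] at hpFG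
  obtain ⟨FF, hFF, rfl⟩ := hF
  obtain ⟨GG, hGG, rfl⟩ := hG
  have hexu : ∀ i, ∃ u : X, ‖u‖ ≤ 1 ∧
      |f i u - FF i (f i)| < FF i (f i) - (1 - α i) ∧ |p u - FF i p| < ε/8 :=
    fun i => aux_approx2 (X := X) (FF i) (hFF i).1 (f i) p
      (by linarith [(hFF i).2]) (by linarith)
  have hexv : ∀ i, ∃ v : X, ‖v‖ ≤ 1 ∧
      |f i v - GG i (f i)| < GG i (f i) - (1 - α i) ∧ |p v - GG i p| < ε/8 :=
    fun i => aux_approx2 (X := X) (GG i) (hGG i).1 (f i) p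
      (by linarith [(hGG i).2]) (by linarith)
  choose u hu1 hu2 hu3 using hexu
  choose v hv1 hv2 hv3 using hexv
  refine ⟨∑ i, lam i • u i,
    ⟨u, fun i => ⟨hu1 i, by have := abs_lt.1 (hu2 i); linarith⟩, rfl⟩,
    ∑ i, lam i • v i,
    ⟨v, fun i => ⟨hv1 i, by have := abs_lt.1 (hv2 i); linarith⟩, rfl⟩, ?_⟩
  have hpu : p (∑ i, lam i • u i) = ∑ i, lam i * p (u i) := by
    rw [map_sum]
    exact Finset.sum_congr rfl fun i _ => by rw [map_smul, smul_eq_mul]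
  have hpv : p (∑ i, lam i • v i) = ∑ i, lam i * p (v i) := by
    rw [map_sum]
    exact Finset.sum_congr rfl fun i _ => by rw [map_smul, smul_eq_mul]
  have hFp : (∑ i, lam i • FF i) p = ∑ i, lam i * FF i p := by
    rw [ContinuousLinearMap.sum_apply]
    exact Finset.sum_congr rfl fun i _ => by
      rw [ContinuousLinearMap.smul_apply, smul_eq_mul]
  have hGp : (∑ i, lam i • GG i) p = ∑ i, lam i * GG i p := by
    rw [ContinuousLinearMap.sum_apply]
    exact Finset.sum_congr rfl fun i _ => by
      rw [ContinuousLinearMap.smul_apply, smul_eq_mul]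
  have h1 : ∑ i, lam i * (FF i p - ε/8) ≤ ∑ i, lam i * p (u i) :=
    Finset.sum_le_sum fun i _ => mul_le_mul_of_nonneg_left
      (by have := abs_lt.1 (hu3 i); linarith) (hlam i)
  have h2 : ∑ i, lam i * p (v i) ≤ ∑ i, lam i * (GG i p + ε/8) :=
    Finset.sum_le_sum fun i _ => mul_le_mul_of_nonneg_left
      (by have := abs_lt.1 (hv3 i); linarith) (hlam i)
  have e1 : ∑ i, lam i * (FF i p - ε/8) = (∑ i, lam i * FF i p) - (∑ i, lam i) * (ε/8) := by
    rw [Finset.sum_mul, ← Finset.sum_sub_distrib]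
    exact Finset.sum_congr rfl fun i _ => by ring
  have e2 : ∑ i, lam i * (GG i p + ε/8) = (∑ i, lam i * GG i p) + (∑ i, lam i) * (ε/8) := by
    rw [Finset.sum_mul, ← Finset.sum_add_distrib]
    exact Finset.sum_congr rfl fun i _ => by ring
  rw [hsum, one_mul] at e1 e2
  rw [hFp, hGp] at hpFG
  have hdist := aux_dist_ge hp (∑ i, lam i • u i) (∑ i, lam i • v i)
  rw [hpu, hpv] at hdist
  linarith

end Directions

theorem stmt_0 (X : Type*) [NormedAddCommGroup X] [NormedSpace ℝ X] [CompleteSpace X] [Nontrivial X] :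
    (LocalDiameterTwoProp X ↔ WStarLocalDiameterTwoProp (StrongDual ℝ X)) ∧
    (DiameterTwoProp X ↔ WStarDiameterTwoProp (StrongDual ℝ X)) ∧
    (StrongDiameterTwoProp X ↔ WStarStrongDiameterTwoProp (StrongDual ℝ X)) :=
  ⟨⟨fun h => ld2p_fwd h, fun h => ld2p_bwd h⟩,
   ⟨fun h => d2p_fwd h, fun h => d2p_bwd h⟩,
   ⟨fun h => sd2p_fwd h, fun h => sd2p_bwd h⟩⟩
end
end

section
/- For a nontrivial real Banach space X the following are equivalent: (i) X is locally octahedral; (ii) for every x ∈ S_X and every ε > 0 there is y ∈ S_X such that ‖x + t·y‖ ≥ (1−ε)(‖x‖ + t) and ‖x − t·y‖ ≥ (1−ε)(‖x‖ + t) for all t > 0; (iii) for every x ∈ S_X and every ε > 0 there is y ∈ S_X such that ‖x + y‖ ≥ 2 − ε and ‖x − y‖ ≥ 2 − ε. -/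
open Metric Set

noncomputable section

private lemma oct_key {X : Type*} [NormedAddCommGroup X] [NormedSpace ℝ X]
    {a b : X} (ha : ‖a‖ = 1) (hb : ‖b‖ = 1) {δ : ℝ} (h : 2 - δ ≤ ‖a + b‖)
    {α β : ℝ} (hα : 0 ≤ α) (hβ : 0 ≤ β) :
    (1 - δ) * (α + β) ≤ ‖α • a + β • b‖ := by
  have hδ : 0 ≤ δ := by
    have := norm_add_le a b
    rw [ha, hb] at this; linarith
  rcases le_total α β with hle | hle
  · have heq : α • a + β • b = β • (a + b) - (β - α) • a := by module
    have h1 : ‖β • (a + b)‖ - ‖(β - α) • a‖ ≤ ‖α • a + β • b‖ := by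
      rw [heq]; exact norm_sub_norm_le _ _
    rw [norm_smul, norm_smul, ha, Real.norm_eq_abs, Real.norm_eq_abs,
      abs_of_nonneg hβ, abs_of_nonneg (by linarith : (0:ℝ) ≤ β - α)] at h1
    nlinarith [h1, mul_le_mul_of_nonneg_left h hβ]
  · have heq : α • a + β • b = α • (a + b) - (α - β) • b := by module
    have h1 : ‖α • (a + b)‖ - ‖(α - β) • b‖ ≤ ‖α • a + β • b‖ := by
      rw [heq]; exact norm_sub_norm_le _ _
    rw [norm_smul, norm_smul, hb, Real.norm_eq_abs, Real.norm_eq_abs,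
      abs_of_nonneg hα, abs_of_nonneg (by linarith : (0:ℝ) ≤ α - β)] at h1
    nlinarith [h1, mul_le_mul_of_nonneg_left h hα]

theorem stmt_1 (X : Type*) [NormedAddCommGroup X] [NormedSpace ℝ X] [CompleteSpace X] [Nontrivial X] :
    List.TFAE
      [LocallyOctahedral X,
       ∀ x : X, ‖x‖ = 1 → ∀ ε : ℝ, 0 < ε → ∃ y : X, ‖y‖ = 1 ∧
         ∀ t : ℝ, 0 < t → (1 - ε) * (‖x‖ + t) ≤ ‖x + t • y‖ ∧
           (1 - ε) * (‖x‖ + t) ≤ ‖x - t • y‖,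
       ∀ x : X, ‖x‖ = 1 → ∀ ε : ℝ, 0 < ε → ∃ y : X, ‖y‖ = 1 ∧
         2 - ε ≤ ‖x + y‖ ∧ 2 - ε ≤ ‖x - y‖] := by
  tfae_have 1 → 2
  · intro h1 x hx ε hε
    obtain ⟨y, hy, hall⟩ := h1 x ε hε
    refine ⟨y, hy, fun t ht => ?_⟩
    have ht' : (0:ℝ) < t⁻¹ := inv_pos.mpr ht
    constructor
    · have := hall t⁻¹
      rw [hx, hy, abs_of_pos ht'] at this
      have h2 := mul_le_mul_of_nonneg_left this ht.le
      have heq : t • (t⁻¹ • x + y) = x + t • y := by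
        rw [smul_add, smul_smul, mul_inv_cancel₀ ht.ne', one_smul]
      calc (1 - ε) * (‖x‖ + t) = t * ((1 - ε) * (t⁻¹ * 1 + 1)) := by
            rw [hx]; field_simp
        _ ≤ t * ‖t⁻¹ • x + y‖ := h2
        _ = ‖t • (t⁻¹ • x + y)‖ := by
            rw [norm_smul, Real.norm_eq_abs, abs_of_pos ht]
        _ = ‖x + t • y‖ := by rw [heq]
    · have := hall (-t⁻¹)
      rw [hx, hy, abs_neg, abs_of_pos ht'] at this
      have h2 := mul_le_mul_of_nonneg_left this ht.le
      have heq : t • ((-t⁻¹) • x + y) = -(x - t • y) := by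
        rw [smul_add, smul_smul, mul_neg, mul_inv_cancel₀ ht.ne']
        module
      calc (1 - ε) * (‖x‖ + t) = t * ((1 - ε) * (t⁻¹ * 1 + 1)) := by
            rw [hx]; field_simp
        _ ≤ t * ‖(-t⁻¹) • x + y‖ := h2
        _ = ‖t • ((-t⁻¹) • x + y)‖ := by
            rw [norm_smul, Real.norm_eq_abs, abs_of_pos ht]
        _ = ‖x - t • y‖ := by rw [heq, norm_neg]
  tfae_have 2 → 3
  · intro h2 x hx ε hε
    obtain ⟨y, hy, hall⟩ := h2 x hx (ε / 2) (by linarith)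
    obtain ⟨hp, hm⟩ := hall 1 one_pos
    rw [hx, one_smul] at hp hm
    exact ⟨y, hy, by linarith, by linarith⟩
  tfae_have 3 → 1
  · intro h3 x ε hε
    by_cases hx : x = 0
    · obtain ⟨z, hz⟩ := exists_ne (0 : X)
      have hzn : ‖‖z‖⁻¹ • z‖ = 1 := by
        rw [norm_smul, norm_inv, norm_norm, inv_mul_cancel₀ (norm_ne_zero_iff.mpr hz)]
      refine ⟨‖z‖⁻¹ • z, hzn, fun s => ?_⟩
      rw [hx, smul_zero, zero_add, hzn, norm_zero]
      nlinarith [abs_nonneg s]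
    · set u : X := ‖x‖⁻¹ • x with hu
      have hun : ‖u‖ = 1 := by
        rw [hu, norm_smul, norm_inv, norm_norm, inv_mul_cancel₀ (norm_ne_zero_iff.mpr hx)]
      obtain ⟨y, hy, hp, hm⟩ := h3 u hun ε hε
      refine ⟨y, hy, fun s => ?_⟩
      have hxpos : (0:ℝ) < ‖x‖ := norm_pos_iff.mpr hx
      rw [hy]
      rcases le_or_gt 0 s with hs | hs
      · have key := oct_key hun hy hp (mul_nonneg hs (norm_nonneg x)) zero_le_one
        have heq : (s * ‖x‖) • u = s • x := by
          rw [hu, smul_smul, mul_assoc, mul_inv_cancel₀ hxpos.ne', mul_one]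
        rw [heq, one_smul] at key
        rwa [abs_of_nonneg hs]
      · have hmu : ‖-u‖ = 1 := by rw [norm_neg, hun]
        have hpm : 2 - ε ≤ ‖-u + y‖ := by
          rw [show -u + y = -(u - y) by module, norm_neg]; exact hm
        have key := oct_key hmu hy hpm
          (mul_nonneg (neg_nonneg.mpr hs.le) (norm_nonneg x)) zero_le_one
        have heq : (-s * ‖x‖) • (-u) = s • x := by
          rw [hu, smul_neg, smul_smul, mul_assoc, mul_inv_cancel₀ hxpos.ne',
            mul_one, neg_smul, neg_neg]
        rw [heq, one_smul] at key
        rwa [abs_of_neg hs]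
  tfae_finish
end
end

section
/- For a nontrivial real Banach space X the following are equivalent: (i) X is weakly octahedral; (ii) whenever E is a finite-dimensional subspace of X, x* ∈ B_{X*}, and ε > 0, there is y ∈ S_X such that ‖x + t·y‖ ≥ (1−ε)(|x*(x)| + t) for all x ∈ S_E and all t > 0; (iii) whenever n ∈ ℕ, x_1,…,x_n ∈ S_X, x* ∈ B_{X*}, and ε > 0, there is y ∈ S_X such that ‖x_i + t·y‖ ≥ (1−ε)(|x*(x_i)| + t) for all i ∈ {1,…,n} and all t ≥ ε. -/
open Metric Set

noncomputable section

theorem stmt_2 (X : Type*) [NormedAddCommGroup X] [NormedSpace ℝ X] [CompleteSpace X] [Nontrivial X] :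
    List.TFAE
      [WeaklyOctahedral X,
       ∀ E : Subspace ℝ X, FiniteDimensional ℝ E →
         ∀ f : X →L[ℝ] ℝ, ‖f‖ ≤ 1 → ∀ ε : ℝ, 0 < ε →
           ∃ y : X, ‖y‖ = 1 ∧ ∀ x ∈ E, ‖x‖ = 1 →
             ∀ t : ℝ, 0 < t → (1 - ε) * (|f x| + t) ≤ ‖x + t • y‖,
       ∀ (n : ℕ) (x : Fin n → X), (∀ i, ‖x i‖ = 1) →
         ∀ f : X →L[ℝ] ℝ, ‖f‖ ≤ 1 → ∀ ε : ℝ, 0 < ε →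
           ∃ y : X, ‖y‖ = 1 ∧ ∀ i, ∀ t : ℝ, ε ≤ t →
             (1 - ε) * (|f (x i)| + t) ≤ ‖x i + t • y‖] := by
  tfae_have 1 → 2 := by
    intro h E hE f hf ε hε
    obtain ⟨y, hy, hy2⟩ := h E hE f hf ε hε
    refine ⟨y, hy, fun x hx hx1 t ht => ?_⟩
    have ht' : t ≠ 0 := ht.ne'
    have h1 := hy2 (t⁻¹ • x) (E.smul_mem t⁻¹ hx)
    have e1 : x + t • y = t • (t⁻¹ • x + y) := by
      rw [smul_add, smul_inv_smul₀ ht']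
    have e2 : |f (t⁻¹ • x)| = t⁻¹ * |f x| := by
      rw [map_smul, smul_eq_mul, abs_mul, abs_of_pos (inv_pos.mpr ht)]
    rw [e1, norm_smul, Real.norm_eq_abs, abs_of_pos ht]
    have := mul_le_mul_of_nonneg_left h1 ht.le
    rw [e2, hy] at this
    have htt : t * t⁻¹ = 1 := mul_inv_cancel₀ ht'
    calc (1 - ε) * (|f x| + t) = t * ((1 - ε) * (t⁻¹ * |f x| + 1)) := by
          linear_combination (ε - 1) * |f x| * htt
      _ ≤ t * ‖t⁻¹ • x + y‖ := this
  tfae_have 2 → 3 := by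
    intro h n x hx f hf ε hε
    have hfd : FiniteDimensional ℝ (Submodule.span ℝ (Set.range x)) :=
      FiniteDimensional.span_of_finite ℝ (Set.finite_range x)
    obtain ⟨y, hy, hy2⟩ := h (Submodule.span ℝ (Set.range x)) hfd f hf ε hε
    exact ⟨y, hy, fun i t ht =>
      hy2 (x i) (Submodule.subset_span (Set.mem_range_self i)) (hx i) t (lt_of_lt_of_le hε ht)⟩
  tfae_have 3 → 1 := by
    intro h E hE f hf ε hε
    obtain ⟨z, hz⟩ := exists_ne (0 : X)
    by_cases hε1 : 1 ≤ ε
    · refine ⟨‖z‖⁻¹ • z, ?_, fun x hx => ?_⟩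
      · rw [norm_smul, norm_inv, norm_norm, inv_mul_cancel₀ (norm_ne_zero_iff.mpr hz)]
      · have : (1 - ε) * (|f x| + ‖‖z‖⁻¹ • z‖) ≤ 0 := by
          apply mul_nonpos_of_nonpos_of_nonneg <;> [linarith; positivity]
        exact this.trans (norm_nonneg _)
    push_neg at hε1
    set δ : ℝ := ε ^ 2 / 8 with hδdef
    have hδ : 0 < δ := by positivity
    -- the unit sphere of E as a subset of X
    set K : Set X := ((↑) : E → X) '' (sphere (0 : E) 1) with hKdef
    have hKc : IsCompact K := (isCompact_sphere (0 : E) 1).image continuous_subtype_val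
    obtain ⟨t0, ht0K, ht0fin, ht0cov⟩ := hKc.finite_cover_balls hδ
    have hKnorm : ∀ w ∈ K, ‖w‖ = 1 ∧ w ∈ E := by
      rintro w ⟨v, hv, rfl⟩
      simp only [mem_sphere_iff_norm, sub_zero] at hv
      exact ⟨hv, v.2⟩
    set n := ht0fin.toFinset.card with hn
    set e := ht0fin.toFinset.equivFin with he
    set xs : Fin n → X := fun i => (e.symm i : X) with hxs
    have hxsnorm : ∀ i, ‖xs i‖ = 1 := by
      intro i
      have : (e.symm i : X) ∈ t0 := ht0fin.mem_toFinset.mp (e.symm i).2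
      exact (hKnorm _ (ht0K this)).1
    obtain ⟨y, hy, hy2⟩ := h n xs hxsnorm f hf (ε / 2) (by linarith)
    refine ⟨y, hy, fun x hx => ?_⟩
    rw [hy]
    by_cases hx0 : x = 0
    · simp only [hx0, zero_add, map_zero, abs_zero, hy]
      nlinarith
    have hs : 0 < ‖x‖ := norm_pos_iff.mpr hx0
    set s := ‖x‖ with hsdef
    set u : X := s⁻¹ • x with hu
    have hun : ‖u‖ = 1 := by
      rw [hu, norm_smul, norm_inv, norm_norm, inv_mul_cancel₀ hs.ne']
    have hsu : s • u = x := by rw [hu, smul_inv_smul₀ hs.ne']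
    have hfx : |f x| = s * |f u| := by
      rw [← hsu, map_smul, smul_eq_mul, abs_mul, abs_of_pos hs]
    have hxy : ‖x + y‖ = s * ‖u + s⁻¹ • y‖ := by
      rw [← hsu]
      rw [show s • u + y = s • (u + s⁻¹ • y) by
        rw [smul_add, smul_inv_smul₀ hs.ne', smul_inv_smul₀ hs.ne']]
      rw [norm_smul, Real.norm_eq_abs, abs_of_pos hs]
    by_cases hcase : ε / 2 ≤ s⁻¹
    · -- find a net point close to u
      have huK : u ∈ K := by
        refine ⟨⟨u, E.smul_mem s⁻¹ hx⟩, ?_, rfl⟩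
        simp [mem_sphere_iff_norm, hun]
      obtain ⟨w, hw⟩ := Set.mem_iUnion.mp (ht0cov huK)
      obtain ⟨hwt0, hwball⟩ := Set.mem_iUnion.mp hw
      have hwfin : w ∈ ht0fin.toFinset := ht0fin.mem_toFinset.mpr hwt0
      set i : Fin n := e ⟨w, hwfin⟩ with hi
      have hxsi : xs i = w := by simp [hxs, hi]
      have hdist : ‖u - w‖ < δ := by
        rw [← dist_eq_norm]; exact mem_ball.mp hwball
      have h1 : (1 - ε / 2) * (|f (xs i)| + s⁻¹) ≤ ‖xs i + s⁻¹ • y‖ := hy2 i s⁻¹ hcase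
      rw [hxsi] at h1
      have h2 : ‖w + s⁻¹ • y‖ ≤ ‖u + s⁻¹ • y‖ + ‖u - w‖ := by
        calc ‖w + s⁻¹ • y‖ = ‖(u + s⁻¹ • y) - (u - w)‖ := by congr 1; abel
          _ ≤ ‖u + s⁻¹ • y‖ + ‖u - w‖ := norm_sub_le _ _
      have h3 : |f u| - |f w| ≤ δ := by
        calc |f u| - |f w| ≤ |f u - f w| := abs_sub_abs_le_abs_sub _ _
          _ = |f (u - w)| := by rw [map_sub]
          _ ≤ ‖f‖ * ‖u - w‖ := f.le_opNorm _
          _ ≤ 1 * δ := mul_le_mul hf hdist.le (norm_nonneg _) zero_le_one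
          _ = δ := one_mul δ
      have key : (1 - ε) * (|f u| + s⁻¹) ≤ ‖u + s⁻¹ • y‖ := by
        have hfu : 0 ≤ |f u| := abs_nonneg _
        have hfw : 0 ≤ |f w| := abs_nonneg _
        nlinarith [norm_nonneg (u - w), hdist]
      have hss : s * s⁻¹ = 1 := mul_inv_cancel₀ hs.ne'
      calc (1 - ε) * (|f x| + 1) = s * ((1 - ε) * (|f u| + s⁻¹)) := by
            rw [hfx]; linear_combination (ε - 1) * hss
        _ ≤ s * ‖u + s⁻¹ • y‖ := by
            exact mul_le_mul_of_nonneg_left key hs.le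
        _ = ‖x + y‖ := hxy.symm
    · push_neg at hcase
      have h2s : 2 < ε * s := by
        have h := mul_lt_mul_of_pos_left hcase hs
        rw [mul_inv_cancel₀ hs.ne'] at h
        linarith
      have hlow : s - 1 ≤ ‖x + y‖ := by
        have := norm_sub_le (x + y) y
        simp only [add_sub_cancel_right] at this
        rw [hy] at this
        linarith
      have hfxs : |f x| ≤ s := by
        calc |f x| ≤ ‖f‖ * ‖x‖ := f.le_opNorm x
          _ ≤ 1 * s := mul_le_mul_of_nonneg_right hf hs.le
          _ = s := one_mul s
      nlinarith
  tfae_finish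
end
end

section
/- For a nontrivial real Banach space X the following are equivalent: (i) X is octahedral; (ii) whenever E is a finite-dimensional subspace of X and ε > 0, there is y ∈ S_X such that ‖x + t·y‖ ≥ (1−ε)(‖x‖ + t) for all x ∈ S_E and all t > 0; (iii) whenever n ∈ ℕ, x_1,…,x_n ∈ S_X, and ε > 0, there is y ∈ S_X such that ‖x_i + y‖ ≥ 2 − ε for all i ∈ {1,…,n}. -/
open Metric Set

noncomputable section

theorem stmt_3 (X : Type*) [NormedAddCommGroup X] [NormedSpace ℝ X] [CompleteSpace X] [Nontrivial X] :
    List.TFAE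
      [Octahedral X,
       ∀ E : Subspace ℝ X, FiniteDimensional ℝ E → ∀ ε : ℝ, 0 < ε →
         ∃ y : X, ‖y‖ = 1 ∧ ∀ x ∈ E, ‖x‖ = 1 →
           ∀ t : ℝ, 0 < t → (1 - ε) * (‖x‖ + t) ≤ ‖x + t • y‖,
       ∀ (n : ℕ) (x : Fin n → X), (∀ i, ‖x i‖ = 1) → ∀ ε : ℝ, 0 < ε →
         ∃ y : X, ‖y‖ = 1 ∧ ∀ i, 2 - ε ≤ ‖x i + y‖] := by
  tfae_have 1 → 2 := by
    intro h E hE ε hε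
    obtain ⟨y, hy, hxy⟩ := h E hE ε hε
    refine ⟨y, hy, fun x hx hx1 t ht => ?_⟩
    have h1 := hxy (t⁻¹ • x) (E.smul_mem _ hx)
    have hnorm : ‖t⁻¹ • x‖ = t⁻¹ := by
      rw [norm_smul, hx1, Real.norm_eq_abs, abs_of_pos (inv_pos.2 ht), mul_one]
    rw [hnorm, hy] at h1
    have heq : x + t • y = t • (t⁻¹ • x + y) := by
      rw [smul_add, smul_inv_smul₀ ht.ne']
    rw [heq, norm_smul, Real.norm_eq_abs, abs_of_pos ht, hx1]
    have := mul_le_mul_of_nonneg_left h1 ht.le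
    have htt : t * t⁻¹ = 1 := mul_inv_cancel₀ ht.ne'
    nlinarith [norm_nonneg (t⁻¹ • x + y)]
  tfae_have 2 → 3 := by
    intro h n x hx ε hε
    obtain ⟨y, hy, hxy⟩ := h (Submodule.span ℝ (Set.range x))
      (FiniteDimensional.span_of_finite ℝ (Set.finite_range x)) (ε / 2) (by linarith)
    refine ⟨y, hy, fun i => ?_⟩
    have := hxy (x i) (Submodule.subset_span (Set.mem_range_self i)) (hx i) 1 one_pos
    rw [one_smul, hx i] at this
    linarith
  tfae_have 3 → 1 := by
    intro h E hE ε hε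
    -- the unit sphere of E, as a subset of X
    set K : Set X := Subtype.val '' (Metric.sphere (0 : E) 1) with hK
    have hKc : IsCompact K := (isCompact_sphere (0 : E) 1).image continuous_subtype_val
    obtain ⟨s, hsK, hsfin, hscov⟩ := hKc.finite_cover_balls (half_pos hε)
    have : Fintype s := hsfin.fintype
    set n := Fintype.card s
    have e : Fin n ≃ s := (Fintype.equivFin s).symm
    set xs : Fin n → X := fun i => ((e i : s) : X) with hxs
    have hxsK : ∀ i, xs i ∈ K := fun i => hsK (e i).2
    have hxs1 : ∀ i, ‖xs i‖ = 1 := by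
      intro i
      obtain ⟨w, hw, hwe⟩ := hxsK i
      rw [← hwe]
      simpa using hw
    obtain ⟨y, hy, hxy⟩ := h n xs hxs1 (ε / 2) (by linarith)
    refine ⟨y, hy, fun x hx => ?_⟩
    rw [hy]
    rcases eq_or_ne x 0 with rfl | hx0
    · simp only [norm_zero, zero_add, hy]
      nlinarith
    · set r := ‖x‖ with hr
      have hr0 : 0 < r := norm_pos_iff.2 hx0
      set u : X := r⁻¹ • x with hu
      have hu1 : ‖u‖ = 1 := by
        rw [hu, norm_smul, Real.norm_eq_abs, abs_of_pos (inv_pos.2 hr0), ← hr,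
          inv_mul_cancel₀ hr0.ne']
      have huK : u ∈ K := by
        refine ⟨⟨u, E.smul_mem _ hx⟩, ?_, rfl⟩
        simpa [Submodule.norm_coe] using hu1
      obtain ⟨c, hcs, hc⟩ := Set.mem_iUnion₂.1 (hscov huK)
      obtain ⟨i, hi⟩ : ∃ i, xs i = c := ⟨e.symm ⟨c, hcs⟩, by simp [hxs]⟩
      have hdist : ‖u - xs i‖ < ε / 2 := by
        rw [hi, ← dist_eq_norm]; exact mem_ball.1 hc
      have huy : 2 - ε ≤ ‖u + y‖ := by
        have h1 := hxy i
        have h2 : ‖xs i + y‖ - ‖u - xs i‖ ≤ ‖u + y‖ := by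
          have h3 := norm_sub_norm_le (xs i + y) (xs i - u)
          have heq : xs i + y - (xs i - u) = u + y := by abel
          rw [heq, norm_sub_rev] at h3
          linarith
        linarith
      have hru : r • u = x := by rw [hu, smul_inv_smul₀ hr0.ne']
      rcases le_total r 1 with hr1 | hr1
      · -- x + y = (u + y) - (1 - r) • u
        have heq : x + y = (u + y) - (1 - r) • u := by
          rw [sub_smul, one_smul, hru]; abel
        have h2 : ‖u + y‖ - ‖(1 - r) • u‖ ≤ ‖x + y‖ := by
          rw [heq]; exact norm_sub_norm_le _ _ |>.trans_eq rfl
        rw [norm_smul, Real.norm_eq_abs, abs_of_nonneg (by linarith), hu1, mul_one] at h2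
        nlinarith
      · -- x + y = r • (u + y) - (r - 1) • y
        have heq : x + y = r • (u + y) - (r - 1) • y := by
          rw [smul_add, sub_smul, one_smul, hru]; abel
        have h2 : ‖r • (u + y)‖ - ‖(r - 1) • y‖ ≤ ‖x + y‖ := by
          rw [heq]; exact norm_sub_norm_le _ _
        rw [norm_smul, norm_smul, Real.norm_eq_abs, Real.norm_eq_abs,
          abs_of_pos hr0, abs_of_nonneg (by linarith), hy, mul_one] at h2
        nlinarith
  tfae_finish
end
end

section
/- For a nontrivial real Banach space X: the dual X* has the weak* local diameter 2 property if and only if X is locally octahedral. -/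
open Metric Set

noncomputable section

lemma eval_le_norm {X : Type*} [NormedAddCommGroup X] [NormedSpace ℝ X]
    {f : X →L[ℝ] ℝ} (hf : ‖f‖ ≤ 1) (z : X) : f z ≤ ‖z‖ := by
  have h := f.le_opNorm z
  have : |f z| ≤ ‖f‖ * ‖z‖ := h
  nlinarith [abs_nonneg (f z), le_abs_self (f z), norm_nonneg z, norm_nonneg f]

lemma neg_eval_le_norm {X : Type*} [NormedAddCommGroup X] [NormedSpace ℝ X]
    {f : X →L[ℝ] ℝ} (hf : ‖f‖ ≤ 1) (z : X) : -(f z) ≤ ‖z‖ := by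
  have := eval_le_norm hf (-z)
  simpa using this

theorem stmt_5 (X : Type*) [NormedAddCommGroup X] [NormedSpace ℝ X] [CompleteSpace X] [Nontrivial X] :
    WStarLocalDiameterTwoProp X ↔ LocallyOctahedral X := by
  constructor
  · intro h x ε hε
    obtain ⟨z0, hz0⟩ := exists_ne (0 : X)
    have hz0n : ‖z0‖ ≠ 0 := norm_ne_zero_iff.2 hz0
    have hunit : ∃ y : X, ‖y‖ = (1:ℝ) :=
      ⟨‖z0‖⁻¹ • z0, by rw [norm_smul, norm_inv, norm_norm, inv_mul_cancel₀ hz0n]⟩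
    by_cases hε1 : 1 ≤ ε
    · obtain ⟨y, hy⟩ := hunit
      refine ⟨y, hy, fun s => ?_⟩
      have h1 : (1 - ε) ≤ 0 := by linarith
      have h2 : 0 ≤ |s| * ‖x‖ + ‖y‖ := by positivity
      nlinarith [norm_nonneg (s • x + y)]
    push_neg at hε1
    by_cases hx : x = 0
    · obtain ⟨y, hy⟩ := hunit
      refine ⟨y, hy, fun s => ?_⟩
      subst hx
      simp [hy]
      nlinarith
    · set u : X := ‖x‖⁻¹ • x with hu_def
      have hxn : ‖x‖ ≠ 0 := norm_ne_zero_iff.2 hx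
      have hu : ‖u‖ = 1 := by rw [hu_def, norm_smul, norm_inv, norm_norm, inv_mul_cancel₀ hxn]
      have hdiam := h u hu ε hε
      set S := {f : X →L[ℝ] ℝ | ‖f‖ ≤ 1 ∧ 1 - ε < f u} with hS
      have hfg : ∃ f ∈ S, ∃ g ∈ S, 2 - ε < dist f g := by
        by_contra hcon
        push_neg at hcon
        have := Metric.diam_le_of_forall_dist_le (by linarith : (0:ℝ) ≤ 2 - ε) hcon
        rw [hdiam] at this; linarith
      obtain ⟨f, hfS, g, hgS, hdfg⟩ := hfg
      rw [dist_eq_norm] at hdfg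
      have hy : ∃ y : X, ‖y‖ = 1 ∧ 2 - ε < f y - g y := by
        by_contra hcon
        push_neg at hcon
        have hb : ‖f - g‖ ≤ 2 - ε := by
          apply ContinuousLinearMap.opNorm_le_of_unit_norm (by linarith)
          intro z hz
          have h1 := hcon z hz
          have h2 := hcon (-z) (by simpa using hz)
          simp only [ContinuousLinearMap.sub_apply, map_neg] at h1 h2 ⊢
          rw [Real.norm_eq_abs, abs_le]
          constructor <;> linarith
        linarith
      obtain ⟨y, hy1, hy2⟩ := hy
      refine ⟨y, hy1, fun s => ?_⟩
      have hfu : 1 - ε < f u := hfS.2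
      have hgu : 1 - ε < g u := hgS.2
      have hfy1 : f y ≤ 1 := by have := eval_le_norm hfS.1 y; rwa [hy1] at this
      have hgy1 : -(g y) ≤ 1 := by have := neg_eval_le_norm hgS.1 y; rwa [hy1] at this
      have hfy : 1 - ε < f y := by linarith
      have hgy : g y < -(1 - ε) := by linarith
      -- reduce to t = s * ‖x‖
      have hsx : s • x = (s * ‖x‖) • u := by
        rw [hu_def, smul_smul, mul_assoc, mul_inv_cancel₀ hxn, mul_one]
      set t := s * ‖x‖ with ht
      have habs : |s| * ‖x‖ = |t| := by
        rw [ht, abs_mul, abs_of_nonneg (norm_nonneg x)]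
      rw [hsx, hy1, habs]
      rcases le_or_gt 0 t with htp | htn
      · have hev : f (t • u + y) = t * f u + f y := by
          simp [map_add, map_smul, smul_eq_mul]
        have hle : f (t • u + y) ≤ ‖t • u + y‖ := eval_le_norm hfS.1 _
        rw [hev] at hle
        have h3 : t * (1 - ε) ≤ t * f u := by
          apply mul_le_mul_of_nonneg_left (le_of_lt hfu) htp
        rw [abs_of_nonneg htp]
        nlinarith
      · have hev : g (t • u + y) = t * g u + g y := by
          simp [map_add, map_smul, smul_eq_mul]
        have hle : -(g (t • u + y)) ≤ ‖t • u + y‖ := neg_eval_le_norm hgS.1 _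
        rw [hev] at hle
        rw [abs_of_neg htn]
        nlinarith [mul_le_mul_of_nonpos_left (le_of_lt hgu) (le_of_lt htn)]
  · intro h x hx α hα
    set S := {f : X →L[ℝ] ℝ | ‖f‖ ≤ 1 ∧ 1 - α < f x} with hS
    have hbdd : Bornology.IsBounded S := by
      apply Bornology.IsBounded.subset (Metric.isBounded_closedBall (x := (0 : X →L[ℝ] ℝ)) (r := 1))
      intro f hf
      simp only [Metric.mem_closedBall, dist_zero_right]
      exact hf.1
    apply le_antisymm
    · apply Metric.diam_le_of_forall_dist_le (by norm_num)
      intro f hf g hg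
      rw [dist_eq_norm]
      calc ‖f - g‖ ≤ ‖f‖ + ‖g‖ := norm_sub_le f g
        _ ≤ 2 := by linarith [hf.1, hg.1]
    · apply le_of_forall_pos_le_add
      intro ε hε
      set δ := min ε α / 4 with hδdef
      have hδ : 0 < δ := by positivity
      have hδε : 4 * δ ≤ ε := by
        have := min_le_left ε α; rw [hδdef]; linarith
      have hδα : 4 * δ ≤ α := by
        have := min_le_right ε α; rw [hδdef]; linarith
      obtain ⟨y, hy1, hkey⟩ := h x δ hδ
      have h1 : (1 - δ) * 2 ≤ ‖x + y‖ := by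
        have := hkey 1
        simp only [abs_one, one_mul, hx, hy1, one_smul] at this
        linarith
      have h2 : (1 - δ) * 2 ≤ ‖x - y‖ := by
        have := hkey (-1)
        simp only [abs_neg, abs_one, one_mul, hx, hy1, neg_one_smul] at this
        rw [show (-x + y) = -(x - y) by abel, norm_neg] at this
        linarith
      obtain ⟨f, hf1, hf2⟩ := exists_dual_vector' ℝ (x + y)
      obtain ⟨g, hg1, hg2⟩ := exists_dual_vector' ℝ (x - y)
      have hf2' : f (x + y) = ‖x + y‖ := by exact_mod_cast hf2
      have hg2' : g (x - y) = ‖x - y‖ := by exact_mod_cast hg2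
      have hfx1 : f x ≤ 1 := by have := eval_le_norm hf1.le x; rwa [hx] at this
      have hfy1 : f y ≤ 1 := by have := eval_le_norm hf1.le y; rwa [hy1] at this
      have hgx1 : g x ≤ 1 := by have := eval_le_norm hg1.le x; rwa [hx] at this
      have hgy1 : -(g y) ≤ 1 := by have := neg_eval_le_norm hg1.le y; rwa [hy1] at this
      have hfsum : f x + f y = ‖x + y‖ := by
        rw [← hf2']; simp [map_add]
      have hgsum : g x - g y = ‖x - y‖ := by
        rw [← hg2']; simp [map_sub]
      have hfx : 1 - 2 * δ ≤ f x := by linarith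
      have hfy : 1 - 2 * δ ≤ f y := by linarith
      have hgx : 1 - 2 * δ ≤ g x := by linarith
      have hgy : g y ≤ -(1 - 2 * δ) := by linarith
      have hfS : f ∈ S := ⟨hf1.le, by linarith⟩
      have hgS : g ∈ S := ⟨hg1.le, by linarith⟩
      have hdist : 2 - 4 * δ ≤ dist f g := by
        rw [dist_eq_norm]
        have hle := (f - g).le_opNorm y
        rw [hy1, mul_one] at hle
        have h5 : f y - g y ≤ ‖f - g‖ := by
          have h6 : f y - g y ≤ ‖(f - g) y‖ := by
            simp only [ContinuousLinearMap.sub_apply, Real.norm_eq_abs]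
            exact le_abs_self _
          linarith
        linarith
      have := Metric.dist_le_diam_of_mem hbdd hfS hgS
      linarith
end
end

section
/- For a nontrivial real Banach space X: X has the local diameter 2 property if and only if the dual X* is locally octahedral. -/
open Metric Set

noncomputable section

lemma aux_oct {Z : Type*} [NormedAddCommGroup Z] [NormedSpace ℝ Z]
    {z y : Z} {ε : ℝ} (hz : ‖z‖ ≤ 1) (hy : ‖y‖ ≤ 1) (h : 2 - ε ≤ ‖z + y‖) :
    ∀ s : ℝ, 0 ≤ s → (1 - ε) * (s + 1) ≤ ‖s • z + y‖ := by
  intro s hs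
  have hε : 0 ≤ ε := by have := norm_add_le z y; linarith
  rcases le_or_gt s 1 with h1 | h1
  · have e : s • z + y = (z + y) - (1 - s) • z := by
      rw [sub_smul, one_smul]; abel
    have h2 : ‖z + y‖ - ‖(1 - s) • z‖ ≤ ‖s • z + y‖ := by
      rw [e]; exact norm_sub_norm_le _ _
    have h3 : ‖(1 - s) • z‖ ≤ 1 - s := by
      rw [norm_smul, Real.norm_eq_abs, abs_of_nonneg (by linarith)]
      nlinarith [norm_nonneg z]
    nlinarith
  · have e : s • z + y = s • (z + y) - (s - 1) • y := by
      rw [smul_add, sub_smul, one_smul]; abel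
    have h2 : ‖s • (z + y)‖ - ‖(s - 1) • y‖ ≤ ‖s • z + y‖ := by
      rw [e]; exact norm_sub_norm_le _ _
    have h4 : ‖s • (z + y)‖ = s * ‖z + y‖ := by
      rw [norm_smul, Real.norm_eq_abs, abs_of_nonneg hs]
    have h3 : ‖(s - 1) • y‖ ≤ s - 1 := by
      rw [norm_smul, Real.norm_eq_abs, abs_of_nonneg (by linarith)]
      nlinarith [norm_nonneg y]
    nlinarith

lemma slice_diam_le_two {Z : Type*} [NormedAddCommGroup Z] (s : Set Z)
    (hs : ∀ x ∈ s, ‖x‖ ≤ 1) : Metric.diam s ≤ 2 := by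
  refine Metric.diam_le_of_forall_dist_le (by norm_num) fun x hx y hy => ?_
  rw [dist_eq_norm]
  calc ‖x - y‖ ≤ ‖x‖ + ‖y‖ := norm_sub_le _ _
  _ ≤ 2 := by have := hs x hx; have := hs y hy; linarith

lemma eval_abs_le {X : Type*} [NormedAddCommGroup X] [NormedSpace ℝ X]
    (φ : X →L[ℝ] ℝ) (x : X) : |φ x| ≤ ‖φ‖ * ‖x‖ := by
  rw [← Real.norm_eq_abs]; exact φ.le_opNorm x

lemma exists_unit_lt {X : Type*} [NormedAddCommGroup X] [NormedSpace ℝ X]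
    (φ : X →L[ℝ] ℝ) {r : ℝ} (hr : r < ‖φ‖) : ∃ x, ‖x‖ ≤ 1 ∧ r < φ x := by
  obtain ⟨x, hx, hx2⟩ := φ.exists_lt_apply_of_lt_opNorm hr
  rw [Real.norm_eq_abs] at hx2
  rcases abs_cases (φ x) with ⟨he, _⟩ | ⟨he, _⟩
  · exact ⟨x, hx.le, by rwa [he] at hx2⟩
  · refine ⟨-x, by simpa using hx.le, ?_⟩
    rw [map_neg]; rw [he] at hx2; linarith

set_option maxHeartbeats 1000000 in
theorem stmt_6_aux (X : Type*) [NormedAddCommGroup X] [NormedSpace ℝ X] [CompleteSpace X] [Nontrivial X] :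
    LocalDiameterTwoProp X ↔ LocallyOctahedral (X →L[ℝ] ℝ) := by
  constructor
  · -- LD2P → LOH of dual
    intro hld f ε hε
    by_cases hf : f = 0
    · obtain ⟨x0, hx0⟩ := exists_ne (0 : X)
      obtain ⟨g, hg1, -⟩ := exists_dual_vector ℝ x0 (norm_ne_zero_iff.2 hx0)
      refine ⟨g, hg1, fun s => ?_⟩
      have : s • f + g = g := by rw [hf, smul_zero, zero_add]
      rw [this, hf, hg1]
      simp only [norm_zero]
      nlinarith [abs_nonneg s]
    · set ε' : ℝ := min ε 1 / 2 with hε'def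
      have hε'pos : 0 < ε' := by positivity
      have hε'le : ε' ≤ ε := by
        have : min ε 1 ≤ ε := min_le_left _ _
        linarith
      have hε'half : ε' ≤ 1 / 2 := by
        have : min ε 1 ≤ 1 := min_le_right _ _
        linarith
      have hfn : ‖f‖ ≠ 0 := norm_ne_zero_iff.2 hf
      set u : X →L[ℝ] ℝ := ‖f‖⁻¹ • f with hudef
      have hu : ‖u‖ = 1 := by
        rw [hudef, norm_smul (‖f‖⁻¹) f, Real.norm_eq_abs, abs_of_nonneg (by positivity)]
        exact inv_mul_cancel₀ hfn
      have hd := hld u hu (ε' / 2) (by positivity)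
      -- extract two far points of the slice
      have hex : ∃ x ∈ {x : X | ‖x‖ ≤ 1 ∧ 1 - ε' / 2 < u x},
          ∃ y ∈ {x : X | ‖x‖ ≤ 1 ∧ 1 - ε' / 2 < u x}, 2 - ε' / 2 < dist x y := by
        by_contra hcon
        push_neg at hcon
        have := Metric.diam_le_of_forall_dist_le (C := 2 - ε' / 2) (by linarith) hcon
        rw [hd] at this; linarith
      obtain ⟨x, ⟨hx1, hx2⟩, y, ⟨hy1, hy2⟩, hxy⟩ := hex
      have hxyn : x - y ≠ 0 := by
        intro h
        rw [dist_eq_norm, h, norm_zero] at hxy; linarith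
      obtain ⟨g, hg1, hg2⟩ := exists_dual_vector ℝ (x - y) (norm_ne_zero_iff.2 hxyn)
      have hgxy : 2 - ε' / 2 < g (x - y) := by
        rw [hg2]; rwa [dist_eq_norm] at hxy
      have hgy' : |g y| ≤ 1 := by
        have := eval_abs_le g y; rw [hg1, one_mul] at this
        exact this.trans hy1
      have hgx' : |g x| ≤ 1 := by
        have := eval_abs_le g x; rw [hg1, one_mul] at this
        exact this.trans hx1
      have hsub : g (x - y) = g x - g y := by rw [map_sub]
      have hgx : 1 - ε' / 2 < g x := by
        have := abs_le.1 hgy'; rw [hsub] at hgxy; linarith [this.1]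
      have hgy : g y < -(1 - ε' / 2) := by
        have := abs_le.1 hgx'; rw [hsub] at hgxy; linarith [this.2]
      -- norm lower bounds
      have hA : 2 - ε' ≤ ‖u + g‖ := by
        have h1 : (u + g) x ≤ ‖u + g‖ := by
          have := eval_abs_le (u + g) x
          have h2 := le_abs_self ((u + g) x)
          nlinarith [norm_nonneg (u + g)]
        have : (u + g) x = u x + g x := rfl
        linarith [this ▸ h1]
      have hB : 2 - ε' ≤ ‖(-u) + g‖ := by
        have h1 : ((-u) + g) (-y) ≤ ‖(-u) + g‖ := by
          have := eval_abs_le ((-u) + g) (-y)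
          have h2 := le_abs_self (((-u) + g) (-y))
          have h3 : ‖(-y : X)‖ ≤ 1 := by simpa using hy1
          nlinarith [norm_nonneg ((-u) + g)]
        have he : ((-u) + g) (-y) = u y - g y := by
          rw [ContinuousLinearMap.add_apply, ContinuousLinearMap.neg_apply, map_neg, map_neg]
          ring
        rw [he] at h1
        linarith
      refine ⟨g, hg1, fun s => ?_⟩
      -- reduce to ε'
      have key : (1 - ε') * (|s| * ‖f‖ + 1) ≤ ‖s • f + g‖ := by
        set t : ℝ := s * ‖f‖ with htdef
        have habs : |s| * ‖f‖ = |t| := by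
          rw [htdef, abs_mul, abs_of_nonneg (norm_nonneg f)]
        have hsf : s • f = t • u := by
          rw [hudef, smul_smul, htdef, mul_assoc, mul_inv_cancel₀ hfn, mul_one]
        rw [habs, hsf]
        rcases le_or_gt 0 t with ht | ht
        · have := aux_oct (z := u) (y := g) hu.le hg1.le hA t ht
          rwa [abs_of_nonneg ht]
        · have := aux_oct (z := -u) (y := g) (by simpa using hu.le) hg1.le hB (-t) (by linarith)
          have he : (-t) • (-u : X →L[ℝ] ℝ) + g = t • u + g := by
            ext z; simp only [ContinuousLinearMap.add_apply, ContinuousLinearMap.smul_apply, ContinuousLinearMap.neg_apply, ContinuousLinearMap.sub_apply, smul_eq_mul]; ring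
          rw [he] at this
          rwa [abs_of_neg ht]
      have hnn : 0 ≤ |s| * ‖f‖ + 1 := by positivity
      calc (1 - ε) * (|s| * ‖f‖ + ‖g‖) = (1 - ε) * (|s| * ‖f‖ + 1) := by rw [hg1]
        _ ≤ (1 - ε') * (|s| * ‖f‖ + 1) := by
            apply mul_le_mul_of_nonneg_right (by linarith) hnn
        _ ≤ ‖s • f + g‖ := key
  · -- LOH of dual → LD2P
    intro hoh f hf α hα
    refine le_antisymm (slice_diam_le_two _ fun x hx => hx.1) ?_
    have hbd : Bornology.IsBounded {x : X | ‖x‖ ≤ 1 ∧ 1 - α < f x} :=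
      (Metric.isBounded_closedBall (x := (0 : X)) (r := 1)).subset
        (fun x hx => mem_closedBall_zero_iff.2 hx.1)
    refine le_of_forall_pos_le_add fun δ hδ => ?_
    set η : ℝ := min δ (min α 1) / 6 with hηdef
    have hηpos : 0 < η := by positivity
    have hηδ : 6 * η ≤ δ := by
      have : min δ (min α 1) ≤ δ := min_le_left _ _
      rw [hηdef]; linarith
    have hηα : 6 * η ≤ α := by
      have := (min_le_right δ (min α 1)).trans (min_le_left α 1)
      rw [hηdef]; linarith
    have hη1 : 6 * η ≤ 1 := by
      have := (min_le_right δ (min α 1)).trans (min_le_right α 1)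
      rw [hηdef]; linarith
    obtain ⟨g, hg1, hg2⟩ := hoh f η hηpos
    have hfg : 2 - 2 * η ≤ ‖f + g‖ := by
      have := hg2 1
      rw [one_smul, abs_one, hf, hg1] at this
      linarith
    have hfg' : 2 - 2 * η ≤ ‖f - g‖ := by
      have := hg2 (-1)
      rw [hf, hg1] at this
      have he : (-1 : ℝ) • f + g = -(f - g) := by
        ext z; simp only [ContinuousLinearMap.add_apply, ContinuousLinearMap.smul_apply, ContinuousLinearMap.neg_apply, ContinuousLinearMap.sub_apply, smul_eq_mul]; ring
      rw [he, norm_neg] at this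
      simp only [abs_neg, abs_one] at this
      linarith
    obtain ⟨x, hx1, hx2⟩ := exists_unit_lt (f + g) (by linarith : 2 - 3 * η < ‖f + g‖)
    obtain ⟨y, hy1, hy2⟩ := exists_unit_lt (f - g) (by linarith : 2 - 3 * η < ‖f - g‖)
    have hgx' : |g x| ≤ 1 := by
      have := eval_abs_le g x; rw [hg1, one_mul] at this; exact this.trans hx1
    have hgy' : |g y| ≤ 1 := by
      have := eval_abs_le g y; rw [hg1, one_mul] at this; exact this.trans hy1
    have hfx' : |f x| ≤ 1 := by
      have := eval_abs_le f x; rw [hf, one_mul] at this; exact this.trans hx1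
    have hfy' : |f y| ≤ 1 := by
      have := eval_abs_le f y; rw [hf, one_mul] at this; exact this.trans hy1
    have hax : (f + g) x = f x + g x := rfl
    have hay : (f - g) y = f y - g y := rfl
    rw [hax] at hx2; rw [hay] at hy2
    have hfx : 1 - α < f x := by
      have := abs_le.1 hgx'; linarith [this.2]
    have hfy : 1 - α < f y := by
      have := abs_le.1 hgy'; linarith [this.1]
    have hgx : 1 - 3 * η ≤ g x := by
      have := abs_le.1 hfx'; linarith [this.2]
    have hgy : g y ≤ -(1 - 3 * η) := by
      have := abs_le.1 hfy'; linarith [this.1]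
    have hmemx : x ∈ {x : X | ‖x‖ ≤ 1 ∧ 1 - α < f x} := ⟨hx1, hfx⟩
    have hmemy : y ∈ {x : X | ‖x‖ ≤ 1 ∧ 1 - α < f x} := ⟨hy1, hfy⟩
    have hdist : 2 - 6 * η ≤ dist x y := by
      have h1 : g (x - y) ≤ ‖x - y‖ := by
        have := eval_abs_le g (x - y)
        rw [hg1, one_mul] at this
        exact (le_abs_self _).trans this
      have h2 : g (x - y) = g x - g y := by rw [map_sub]
      rw [dist_eq_norm]
      linarith [h2 ▸ h1]
    have := Metric.dist_le_diam_of_mem hbd hmemx hmemy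
    linarith

theorem stmt_6 (X : Type*) [NormedAddCommGroup X] [NormedSpace ℝ X] [CompleteSpace X] [Nontrivial X] :
    LocalDiameterTwoProp X ↔ LocallyOctahedral (StrongDual ℝ X) :=
  stmt_6_aux X
end
end

section
/- For a nontrivial real Banach space X: the dual X* has the weak* diameter 2 property if and only if X is weakly octahedral. -/
open Metric Set

noncomputable section

set_option maxHeartbeats 1000000

section Helpers
variable {X : Type*} [NormedAddCommGroup X] [NormedSpace ℝ X]

lemma wstar_basic_nbhd (U : Set (WeakDual ℝ X)) (hU : IsOpen U)
    (g : X →L[ℝ] ℝ) (hg : StrongDual.toWeakDual g ∈ U) :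
    ∃ (s : Finset X) (η : ℝ), 0 < η ∧
      ∀ h : X →L[ℝ] ℝ, (∀ x ∈ s, |h x - g x| < η) → StrongDual.toWeakDual h ∈ U := by
  obtain ⟨V, hV, hVU⟩ := isOpen_induced_iff.mp hU
  have hgV : (fun x : X => g x) ∈ V := by
    have : StrongDual.toWeakDual g ∈ ((fun x y => ((topDualPairing ℝ X) x) y) ⁻¹' V) :=
      hVU ▸ hg
    exact this
  obtain ⟨I, u, hu, hpi⟩ := isOpen_pi_iff.mp hV _ hgV
  have hr : ∀ a ∈ I, ∃ r > 0, ball (g a) r ⊆ u a := by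
    intro a ha
    exact Metric.isOpen_iff.mp (hu a ha).1 _ (hu a ha).2
  choose! r hr0 hrball using hr
  rcases I.eq_empty_or_nonempty with hI | hI
  · refine ⟨∅, 1, one_pos, fun h _ => ?_⟩
    rw [← hVU]
    apply hpi
    intro a ha
    simp [hI] at ha
  · refine ⟨I, I.inf' hI r, ?_, fun h hclose => ?_⟩
    · exact (Finset.lt_inf'_iff hI).mpr fun a ha => hr0 a ha
    · rw [← hVU]
      apply hpi
      intro a ha
      apply hrball a ha
      rw [Metric.mem_ball, Real.dist_eq]
      exact lt_of_lt_of_le (hclose a ha) (Finset.inf'_le _ ha)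

lemma diam_eq_two_of (S : Set (X →L[ℝ] ℝ)) (hb : ∀ f ∈ S, ‖f‖ ≤ 1)
    (h : ∀ δ : ℝ, 0 < δ → δ < 1 → ∃ f ∈ S, ∃ g ∈ S, 2 - δ ≤ ‖f - g‖) :
    Metric.diam S = 2 := by
  have hbdd : Bornology.IsBounded S :=
    (Metric.isBounded_closedBall (x := (0 : X →L[ℝ] ℝ)) (r := 1)).subset
      (fun f hf => by simpa [Metric.mem_closedBall, dist_eq_norm] using hb f hf)
  apply le_antisymm
  · apply Metric.diam_le_of_forall_dist_le (by norm_num)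
    intro f hf g hg
    rw [dist_eq_norm]
    calc ‖f - g‖ ≤ ‖f‖ + ‖g‖ := norm_sub_le f g
    _ ≤ 2 := by linarith [hb f hf, hb g hg]
  · by_contra hcon
    push_neg at hcon
    set δ : ℝ := min (1/2) ((2 - Metric.diam S)/2) with hδ
    have hd0 : 0 ≤ Metric.diam S := Metric.diam_nonneg
    have hδ0 : 0 < δ := lt_min (by norm_num) (by linarith)
    have hδ1 : δ < 1 := lt_of_le_of_lt (min_le_left _ _) (by norm_num)
    obtain ⟨f, hf, g, hg, hfg⟩ := h δ hδ0 hδ1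
    have := Metric.dist_le_diam_of_mem hbdd hf hg
    rw [dist_eq_norm] at this
    have hδ2 : δ ≤ (2 - Metric.diam S)/2 := min_le_right _ _
    linarith

lemma extension_lemma [CompleteSpace X] (E : Subspace ℝ X) [FiniteDimensional ℝ E]
    (g : X →L[ℝ] ℝ) (hg : ‖g‖ ≤ 1) (ε : ℝ) (hε0 : 0 < ε) (hε1 : ε < 1)
    (y : X) (hy : ‖y‖ = 1)
    (hocta : ∀ x ∈ E, (1 - ε) * (|g x| + 1) ≤ ‖x + y‖)
    (c : ℝ) (hc : |c| = 1) :
    ∃ h : X →L[ℝ] ℝ, ‖h‖ ≤ 1 ∧ (∀ x ∈ E, h x = (1 - ε) * g x) ∧ h y = (1 - ε) * c := by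
  have hyE : y ∉ E := by
    intro hyE
    have h1 := hocta (-y) (E.neg_mem hyE)
    rw [neg_add_cancel, norm_zero] at h1
    nlinarith [abs_nonneg (g (-y))]
  set T : (E × ℝ) →ₗ[ℝ] X :=
    E.subtype.comp (LinearMap.fst ℝ E ℝ) +
      (LinearMap.toSpanSingleton ℝ X y).comp (LinearMap.snd ℝ E ℝ) with hT
  have hTapp : ∀ p : E × ℝ, T p = (p.1 : X) + p.2 • y := fun p => rfl
  have hTinj : Function.Injective T := by
    rw [← LinearMap.ker_eq_bot]
    rw [Submodule.eq_bot_iff]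
    rintro ⟨x, t⟩ hp
    rw [LinearMap.mem_ker, hTapp] at hp
    simp only at hp
    by_cases ht : t = 0
    · subst ht
      simp at hp
      simp [hp]
    · exfalso
      apply hyE
      have h2 : t • y = -(x : X) := by
        rw [add_comm] at hp
        exact add_eq_zero_iff_eq_neg.mp hp
      rw [← inv_smul_smul₀ ht y, h2]
      exact E.smul_mem _ (E.neg_mem x.2)
  set F : Subspace ℝ X := LinearMap.range T with hF
  set e : (E × ℝ) ≃ₗ[ℝ] F := LinearEquiv.ofInjective T hTinj with he
  set ℓ : (E × ℝ) →ₗ[ℝ] ℝ :=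
    (1 - ε) • ((g.toLinearMap.comp E.subtype).comp (LinearMap.fst ℝ E ℝ)
      + c • LinearMap.snd ℝ E ℝ) with hℓ
  have hℓapp : ∀ p : E × ℝ, ℓ p = (1 - ε) * (g (p.1 : X) + c * p.2) := fun p => rfl
  set φ₀ : F →ₗ[ℝ] ℝ := ℓ.comp e.symm.toLinearMap with hφ₀
  haveI : FiniteDimensional ℝ F := by
    have : FiniteDimensional ℝ (E × ℝ) := inferInstance
    exact Module.Finite.range T
  set φ : F →L[ℝ] ℝ := LinearMap.toContinuousLinearMap φ₀ with hφ
  have hφapp : ∀ v : F, φ v = ℓ (e.symm v) := fun v =>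
    congrFun (LinearMap.coe_toContinuousLinearMap' φ₀) v
  have hkey : ∀ p : E × ℝ, φ ⟨T p, LinearMap.mem_range_self T p⟩ = ℓ p := by
    intro p
    rw [hφapp]
    congr 1
    have : (⟨T p, LinearMap.mem_range_self T p⟩ : F) = e p :=
      Subtype.ext (LinearEquiv.ofInjective_apply T p).symm
    rw [this, LinearEquiv.symm_apply_apply]
  have hφnorm : ‖φ‖ ≤ 1 := by
    apply ContinuousLinearMap.opNorm_le_bound φ zero_le_one
    intro v
    rw [one_mul]
    set p : E × ℝ := e.symm v with hp
    have hvp : (v : X) = T p := by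
      have h1 : e p = v := LinearEquiv.apply_symm_apply e v
      have h2 : ((e p : F) : X) = T p := LinearEquiv.ofInjective_apply T p
      rw [← h1, h2]
    have hφv : φ v = ℓ p := hφapp v
    have hvnorm : ‖v‖ = ‖(p.1 : X) + p.2 • y‖ := by
      rw [show ‖v‖ = ‖(v : X)‖ from rfl, hvp, hTapp]
    rw [hφv, hℓapp, Real.norm_eq_abs, hvnorm]
    clear_value p
    obtain ⟨x, t⟩ := p
    simp only
    by_cases ht : t = 0
    · subst ht
      simp only [mul_zero, add_zero, zero_smul]
      have h1 : |g (x : X)| ≤ ‖(x : X)‖ := by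
        calc |g (x : X)| ≤ ‖g‖ * ‖(x : X)‖ := by
              rw [← Real.norm_eq_abs]; exact g.le_opNorm _
        _ ≤ ‖(x : X)‖ := by nlinarith [norm_nonneg (x : X)]
      rw [abs_mul]
      have : |(1:ℝ) - ε| = 1 - ε := abs_of_pos (by linarith)
      nlinarith [abs_nonneg (g (x:X))]
    · have hx' : t⁻¹ • (x : X) ∈ E := E.smul_mem _ x.2
      have h1 := hocta _ hx'
      have h2 : |t| * ‖t⁻¹ • (x : X) + y‖ = ‖(x : X) + t • y‖ := by
        rw [← Real.norm_eq_abs, ← norm_smul, smul_add, smul_smul,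
          mul_inv_cancel₀ ht, one_smul]
      have h3 : |g (t⁻¹ • (x : X))| = |t|⁻¹ * |g (x : X)| := by
        rw [map_smul, smul_eq_mul, abs_mul, abs_inv]
      have h4 : (1 - ε) * (|g (x:X)| + |t|) ≤ ‖(x : X) + t • y‖ := by
        rw [← h2]
        have ht0 : (0:ℝ) < |t| := abs_pos.mpr ht
        have := mul_le_mul_of_nonneg_left h1 ht0.le
        calc (1 - ε) * (|g (x:X)| + |t|)
            = |t| * ((1 - ε) * (|g (t⁻¹ • (x : X))| + 1)) := by
              rw [h3]; field_simp
        _ ≤ |t| * ‖t⁻¹ • (x : X) + y‖ := this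
      calc |(1 - ε) * (g (x:X) + c * t)| ≤ (1 - ε) * (|g (x:X)| + |t|) := by
            rw [abs_mul, abs_of_pos (show (0:ℝ) < 1 - ε by linarith)]
            have : |g (x:X) + c * t| ≤ |g (x:X)| + |t| := by
              calc |g (x:X) + c * t| ≤ |g (x:X)| + |c * t| := abs_add_le _ _
              _ = |g (x:X)| + |t| := by rw [abs_mul, hc, one_mul]
            nlinarith
      _ ≤ ‖(x : X) + t • y‖ := h4
  obtain ⟨h, hext, hnorm⟩ := exists_extension_norm_eq F φ
  refine ⟨h, by rw [hnorm]; exact hφnorm, ?_, ?_⟩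
  · intro x hx
    have : h (T (⟨x, hx⟩, 0)) = ℓ (⟨x, hx⟩, 0) := by
      rw [← hkey]; exact hext ⟨T (⟨x, hx⟩, 0), LinearMap.mem_range_self T _⟩
    rw [hTapp] at this
    simp only [zero_smul, add_zero] at this
    rw [this, hℓapp]
    simp
  · have : h (T (0, 1)) = ℓ (0, 1) := by
      rw [← hkey]; exact hext ⟨T (0, 1), LinearMap.mem_range_self T _⟩
    rw [hTapp] at this
    simp only [one_smul, Submodule.coe_zero, zero_add] at this
    rw [this, hℓapp]
    simp

lemma backward_dir {X : Type*} [NormedAddCommGroup X] [NormedSpace ℝ X] [CompleteSpace X]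
    (hwo : WeaklyOctahedral X) : WStarDiameterTwoProp X := by
  intro U hU hne
  obtain ⟨g, hg1, hgU⟩ := hne
  obtain ⟨s, η, hη, hs⟩ := wstar_basic_nbhd U hU g hgU
  apply diam_eq_two_of
  · exact fun f hf => hf.1
  · intro δ hδ0 hδ1
    set M : ℝ := ∑ x ∈ s, ‖x‖ with hM
    have hM0 : 0 ≤ M := Finset.sum_nonneg fun _ _ => norm_nonneg _
    set ε : ℝ := min (min (δ/4) (η/(2*(1+M)))) (1/2) with hεdef
    have hε0 : 0 < ε := by
      apply lt_min (lt_min (by linarith) (by positivity)) (by norm_num)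
    have hε1 : ε < 1 := lt_of_le_of_lt (min_le_right _ _) (by norm_num)
    have hεδ : ε ≤ δ/4 := le_trans (min_le_left _ _) (min_le_left _ _)
    have hεη : ε ≤ η/(2*(1+M)) := le_trans (min_le_left _ _) (min_le_right _ _)
    set E : Subspace ℝ X := Submodule.span ℝ (s : Set X) with hE
    haveI : FiniteDimensional ℝ E := by
      apply FiniteDimensional.span_of_finite
      exact s.finite_toSet
    obtain ⟨y, hy, hocta⟩ := hwo E inferInstance g hg1 ε hε0
    have hocta' : ∀ x ∈ E, (1 - ε) * (|g x| + 1) ≤ ‖x + y‖ := by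
      intro x hx; have := hocta x hx; rwa [hy] at this
    obtain ⟨h₁, hn₁, hE₁, hy₁⟩ := extension_lemma E g hg1 ε hε0 hε1 y hy hocta' 1 (by norm_num)
    obtain ⟨h₂, hn₂, hE₂, hy₂⟩ := extension_lemma E g hg1 ε hε0 hε1 y hy hocta'
      (-1) (by norm_num)
    have hmem : ∀ h : X →L[ℝ] ℝ, (∀ x ∈ E, h x = (1 - ε) * g x) →
        StrongDual.toWeakDual h ∈ U := by
      intro h hh
      apply hs
      intro x hx
      rw [hh x (Submodule.subset_span hx)]
      have hxM : ‖x‖ ≤ M := Finset.single_le_sum (fun i _ => norm_nonneg i) hx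
      have hgx : |g x| ≤ ‖x‖ := by
        calc |g x| ≤ ‖g‖ * ‖x‖ := by rw [← Real.norm_eq_abs]; exact g.le_opNorm _
        _ ≤ ‖x‖ := by nlinarith [norm_nonneg x]
      have : |(1 - ε) * g x - g x| = ε * |g x| := by
        rw [show (1 - ε) * g x - g x = -(ε * g x) by ring, abs_neg, abs_mul,
          abs_of_pos hε0]
      rw [this]
      have h1 : ε * |g x| ≤ ε * M := by nlinarith [abs_nonneg (g x)]
      have h2' := (le_div_iff₀ (by positivity : (0:ℝ) < 2*(1+M))).mp hεη
      have h2 : ε * M < η := by nlinarith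
      linarith
    refine ⟨h₁, ⟨hn₁, hmem h₁ hE₁⟩, h₂, ⟨hn₂, hmem h₂ hE₂⟩, ?_⟩
    have hval : (h₁ - h₂) y = 2 * (1 - ε) := by
      rw [ContinuousLinearMap.sub_apply, hy₁, hy₂]; ring
    have : (h₁ - h₂) y ≤ ‖h₁ - h₂‖ := by
      calc (h₁ - h₂) y ≤ |(h₁ - h₂) y| := le_abs_self _
      _ ≤ ‖h₁ - h₂‖ * ‖y‖ := by rw [← Real.norm_eq_abs]; exact (h₁ - h₂).le_opNorm y
      _ = ‖h₁ - h₂‖ := by rw [hy, mul_one]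
    rw [hval] at this
    linarith

lemma forward_dir {X : Type*} [NormedAddCommGroup X] [NormedSpace ℝ X] [Nontrivial X]
    (hd2 : WStarDiameterTwoProp X) : WeaklyOctahedral X := by
  intro E instE f hf ε hε
  rcases le_or_gt 1 ε with hε1 | hε1
  · obtain ⟨y, hy⟩ := exists_norm_eq X zero_le_one
    refine ⟨y, hy, fun x _ => ?_⟩
    have h1 : (1 - ε) * (|f x| + ‖y‖) ≤ 0 :=
      mul_nonpos_of_nonpos_of_nonneg (by linarith) (by positivity)
    exact le_trans h1 (norm_nonneg _)
  · haveI := instE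
    set δ : ℝ := ε / 4 with hδdef
    have hδ0 : 0 < δ := by positivity
    have hδ1 : δ < 1 := by rw [hδdef]; linarith
    set R : ℝ := 2 / ε with hRdef
    set K : Set X := (Subtype.val : E → X) '' closedBall (0 : E) R with hK
    have hKcomp : IsCompact K := (isCompact_closedBall (0 : E) R).image continuous_subtype_val
    have hcover : K ⊆ ⋃ c ∈ K, ball c δ := fun x hx =>
      mem_biUnion hx (mem_ball_self hδ0)
    obtain ⟨b', hb'sub, hb'fin, hb'cov⟩ :=
      hKcomp.elim_finite_subcover_image (fun c _ => isOpen_ball) hcover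
    set W : Set (WeakDual ℝ X) := {h | ∀ c ∈ b', |h c - f c| < δ} with hW
    have hWopen : IsOpen W := by
      have hWeq : W = ⋂ c ∈ b', {h : WeakDual ℝ X | |h c - f c| < δ} := by
        ext h; simp [hW, Set.mem_iInter₂]
      rw [hWeq]
      apply hb'fin.isOpen_biInter
      intro c _
      have hc1 : Continuous fun h : WeakDual ℝ X => |h c - f c| :=
        continuous_abs.comp ((WeakDual.eval_continuous c).sub continuous_const)
      exact isOpen_lt hc1 continuous_const
    have hfW : StrongDual.toWeakDual f ∈ W := fun c _ => by
      show |f c - f c| < δ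
      simpa using hδ0
    have hdiam := hd2 W hWopen ⟨f, hf, hfW⟩
    have hex : ∃ g₁, (‖g₁‖ ≤ 1 ∧ StrongDual.toWeakDual g₁ ∈ W) ∧
        ∃ g₂, (‖g₂‖ ≤ 1 ∧ StrongDual.toWeakDual g₂ ∈ W) ∧ 2 - δ < dist g₁ g₂ := by
      by_contra hcon
      push_neg at hcon
      have hle : Metric.diam {f : X →L[ℝ] ℝ | ‖f‖ ≤ 1 ∧ StrongDual.toWeakDual f ∈ W}
          ≤ 2 - δ :=
        Metric.diam_le_of_forall_dist_le (show (0:ℝ) ≤ 2 - δ by linarith)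
          (fun g₁ hg₁ g₂ hg₂ => hcon g₁ hg₁ g₂ hg₂)
      rw [hdiam] at hle
      linarith
    obtain ⟨g₁, ⟨hg₁n, hg₁W⟩, g₂, ⟨hg₂n, hg₂W⟩, hdist⟩ := hex
    rw [dist_eq_norm] at hdist
    obtain ⟨y₀, hy₀1, hy₀2⟩ := (g₁ - g₂).exists_lt_apply_of_lt_opNorm hdist
    rw [Real.norm_eq_abs] at hy₀2
    set z : X := if 0 ≤ (g₁ - g₂) y₀ then y₀ else -y₀ with hz
    have hz1 : ‖z‖ < 1 := by
      rw [hz]; split_ifs <;> simpa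
    have hz2 : 2 - δ < (g₁ - g₂) z := by
      rw [hz]; split_ifs with hsgn
      · rwa [abs_of_nonneg hsgn] at hy₀2
      · rw [map_neg]; rwa [abs_of_neg (not_le.mp hsgn)] at hy₀2
    have hzpos : 0 < (g₁ - g₂) z := by linarith
    have hzne : z ≠ 0 := by
      intro h0; rw [h0, map_zero] at hzpos; exact lt_irrefl 0 hzpos
    have hznorm : 0 < ‖z‖ := norm_pos_iff.mpr hzne
    set y : X := ‖z‖⁻¹ • z with hyz
    have hy : ‖y‖ = 1 := by
      rw [hyz, norm_smul, norm_inv, norm_norm, inv_mul_cancel₀ (ne_of_gt hznorm)]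
    have hzy : 2 - δ < (g₁ - g₂) y := by
      have h1 : (g₁ - g₂) y = ‖z‖⁻¹ * ((g₁ - g₂) z) := by
        rw [hyz, map_smul, smul_eq_mul]
      have h2 : 1 ≤ ‖z‖⁻¹ := one_le_inv_iff₀.mpr ⟨hznorm, hz1.le⟩
      nlinarith
    have hsub : ∀ w : X, (g₁ - g₂) w = g₁ w - g₂ w := fun w => rfl
    have habs : ∀ (g : X →L[ℝ] ℝ) (w : X), ‖g‖ ≤ 1 → |g w| ≤ ‖w‖ := by
      intro g w hg
      calc |g w| ≤ ‖g‖ * ‖w‖ := by rw [← Real.norm_eq_abs]; exact g.le_opNorm _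
      _ ≤ ‖w‖ := by nlinarith [norm_nonneg w]
    have hg1y : 1 - δ < g₁ y := by
      have hb := habs g₂ y hg₂n
      rw [hy] at hb
      have := abs_le.mp hb
      rw [hsub] at hzy
      linarith [this.1]
    have hg2y : g₂ y < -(1 - δ) := by
      have hb := habs g₁ y hg₁n
      rw [hy] at hb
      have := abs_le.mp hb
      rw [hsub] at hzy
      linarith [this.2]
    refine ⟨y, hy, fun x hxE => ?_⟩
    rw [hy]
    have hfx : |f x| ≤ ‖x‖ := habs f x hf
    rcases le_or_gt ‖x‖ R with hxR | hxR
    · have hxK : x ∈ K := ⟨⟨x, hxE⟩, by rw [mem_closedBall_zero_iff]; exact hxR, rfl⟩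
      obtain ⟨c, hcb, hcball⟩ := mem_iUnion₂.mp (hb'cov hxK)
      rw [mem_ball, dist_eq_norm] at hcball
      have hW1 : |g₁ c - f c| < δ := hg₁W c hcb
      have hW2 : |g₂ c - f c| < δ := hg₂W c hcb
      have hfc : |f c - f x| ≤ ‖x - c‖ := by
        have h1 : f c - f x = f (c - x) := by rw [map_sub]
        rw [h1, ← norm_sub_rev]
        exact habs f (c - x) hf
      have htri : ‖c + y‖ ≤ ‖x + y‖ + ‖x - c‖ := by
        have h1 : c + y = (x + y) + (c - x) := by abel
        rw [h1]
        calc ‖x + y + (c - x)‖ ≤ ‖x + y‖ + ‖c - x‖ := norm_add_le _ _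
        _ = ‖x + y‖ + ‖x - c‖ := by rw [norm_sub_rev]
      have hcy1 : g₁ c + g₁ y ≤ ‖c + y‖ := by
        have h1 := habs g₁ (c + y) hg₁n
        rw [map_add] at h1
        exact le_trans (le_abs_self _) h1
      have hcy2 : -(g₂ c + g₂ y) ≤ ‖c + y‖ := by
        have h1 := habs g₂ (c + y) hg₂n
        rw [map_add] at h1
        exact le_trans (neg_le_abs _) h1
      have hW1' := abs_lt.mp hW1
      have hW2' := abs_lt.mp hW2
      have hfc' := abs_le.mp hfc
      rcases abs_cases (f x) with ⟨heq, hsgn⟩ | ⟨heq, hsgn⟩ <;> rw [heq]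
      · nlinarith [mul_nonneg hε.le hsgn]
      · nlinarith [mul_nonneg hε.le (show (0:ℝ) ≤ -f x by linarith)]
    · have h1 : ‖x‖ - 1 ≤ ‖x + y‖ := by
        have h2 : x = (x + y) - y := by abel
        calc ‖x‖ - 1 = ‖(x + y) - y‖ - 1 := by rw [← h2]
        _ ≤ (‖x + y‖ + ‖y‖) - 1 := by linarith [norm_sub_le (x + y) y]
        _ = ‖x + y‖ := by rw [hy]; ring
      have h2 : 2 < ‖x‖ * ε := by
        rw [hRdef] at hxR
        exact (div_lt_iff₀ hε).mp hxR
      nlinarith [mul_le_mul_of_nonneg_left hfx (by linarith : (0:ℝ) ≤ 1 - ε)]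

end Helpers

theorem stmt_7 (X : Type*) [NormedAddCommGroup X] [NormedSpace ℝ X] [CompleteSpace X] [Nontrivial X] :
    WStarDiameterTwoProp X ↔ WeaklyOctahedral X := by
  exact ⟨fun h => forward_dir h, fun h => backward_dir h⟩
end
end

section
/- For a nontrivial real Banach space X: X has the diameter 2 property if and only if the dual X* is weakly octahedral. -/
open Metric Set

noncomputable section

open Topology Filter in
lemma pi_clm_repr {ι : Type*} [Fintype ι] [DecidableEq ι] (h : (ι → ℝ) →L[ℝ] ℝ) (v : ι → ℝ) :
    h v = ∑ i, v i * h (Pi.single i 1) := by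
  conv_lhs => rw [← Finset.univ_sum_single v]
  rw [map_sum]
  refine Finset.sum_congr rfl fun i _ => ?_
  have : Pi.single i (v i) = v i • (Pi.single i 1 : ι → ℝ) := by
    ext j
    by_cases hj : j = i
    · subst hj; simp
    · simp [Pi.single_eq_of_ne hj]
  rw [this, map_smul, smul_eq_mul]

lemma mem_closure_image_ball {X : Type*} [NormedAddCommGroup X] [NormedSpace ℝ X]
    {ι : Type*} [Fintype ι] [DecidableEq ι] (φ : ι → X →L[ℝ] ℝ) (r : ℝ) (hr : 0 < r)
    (p : ι → ℝ)
    (hp : ∀ a : ι → ℝ, |∑ i, a i * p i| ≤ r * ‖∑ i, a i • φ i‖) :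
    p ∈ closure ((fun x i => φ i x) '' closedBall (0:X) r) := by
  by_contra hmem
  set T : X → ι → ℝ := fun x i => φ i x with hT
  have hconv : Convex ℝ (closure (T '' closedBall (0:X) r)) := by
    refine Convex.closure ?_
    have : T '' closedBall (0:X) r =
        (LinearMap.pi (fun i => (φ i : X →ₗ[ℝ] ℝ))) '' closedBall (0:X) r := rfl
    rw [this]
    exact (convex_closedBall (0:X) r).linear_image _
  obtain ⟨h, u, hlt, hup⟩ := geometric_hahn_banach_closed_point hconv isClosed_closure hmem
  set a : ι → ℝ := fun i => h (Pi.single i 1) with ha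
  set g : X →L[ℝ] ℝ := ∑ i, a i • φ i with hg
  have hgz : ∀ z : X, g z = h (T z) := by
    intro z
    rw [pi_clm_repr h (T z)]
    simp [hg, hT, ha, ContinuousLinearMap.sum_apply, mul_comm]
  have hu0 : 0 < u := by
    have := hlt (T 0) (subset_closure ⟨0, mem_closedBall_self hr.le, rfl⟩)
    simpa [← hgz 0] using this
  have habs : ∀ z : X, ‖z‖ ≤ r → |g z| ≤ u := by
    intro z hz
    have h1 : g z < u := by
      rw [hgz]; exact hlt _ (subset_closure ⟨z, by simpa using hz, rfl⟩)
    have h2 : -(g z) < u := by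
      have : g (-z) < u := by
        rw [hgz]; exact hlt _ (subset_closure ⟨-z, by simpa using hz, rfl⟩)
      simpa using this
    exact abs_le.2 ⟨by linarith, h1.le⟩
  have hnorm : r * ‖g‖ ≤ u := by
    rw [mul_comm, ← le_div_iff₀ hr]
    refine ContinuousLinearMap.opNorm_le_bound _ (by positivity) fun x => ?_
    rcases eq_or_ne x 0 with rfl | hx
    · simp
    · have hxn : (0:ℝ) < ‖x‖ := norm_pos_iff.2 hx
      have := habs ((r / ‖x‖) • x) (by
        rw [norm_smul, Real.norm_eq_abs, abs_of_pos (by positivity)]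
        rw [div_mul_cancel₀ _ hxn.ne'])
      rw [map_smul, smul_eq_mul, abs_mul, abs_of_pos (by positivity)] at this
      rw [Real.norm_eq_abs]
      calc |g x| = (r / ‖x‖ * |g x|) * (‖x‖ / r) := by field_simp
        _ ≤ u * (‖x‖ / r) := by
            apply mul_le_mul_of_nonneg_right this (by positivity)
        _ = u / r * ‖x‖ := by ring
  have hupeq : h p = ∑ i, a i * p i := by
    rw [pi_clm_repr h p]; simp [ha, mul_comm]
  have : u < u := lt_of_lt_of_le (hupeq ▸ hup)
    (le_trans (le_abs_self _) (le_trans (hp a) hnorm))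
  exact lt_irrefl _ this


open Topology Filter in
lemma exists_basic_nbhd {X : Type*} [NormedAddCommGroup X] [NormedSpace ℝ X]
    (U : Set (WeakSpace ℝ X)) (hU : IsOpen U) (x₀ : X) (hx : toWeakSpace ℝ X x₀ ∈ U) :
    ∃ (I : Finset (X →L[ℝ] ℝ)) (δ : ℝ), 0 < δ ∧
      ∀ x : X, (∀ f ∈ I, |f x - f x₀| < δ) → toWeakSpace ℝ X x ∈ U := by
  classical
  set B := (topDualPairing ℝ X).flip with hB
  have hUn : U ∈ 𝓝 (toWeakSpace ℝ X x₀) := hU.mem_nhds hx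
  have hUn' : U ∈ Filter.comap (fun (x : WeakSpace ℝ X) (y : X →L[ℝ] ℝ) => B x y)
      (𝓝 (fun y => B (toWeakSpace ℝ X x₀) y)) := by
    have h := nhds_induced (fun (x : WeakSpace ℝ X) (y : X →L[ℝ] ℝ) => B x y)
      (toWeakSpace ℝ X x₀)
    exact h ▸ hUn
  obtain ⟨V, hV, hVsub⟩ := Filter.mem_comap.1 hUn'
  rw [nhds_pi, Filter.mem_pi] at hV
  obtain ⟨I, hIfin, t, ht, htsub⟩ := hV
  set Ifin := hIfin.toFinset with hIfin'
  have hchoice : ∀ f : X →L[ℝ] ℝ, ∃ d : ℝ, 0 < d ∧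
      (f ∈ I → Metric.ball (B (toWeakSpace ℝ X x₀) f) d ⊆ t f) := by
    intro f
    by_cases hf : f ∈ I
    · obtain ⟨d, hd, hball⟩ := Metric.mem_nhds_iff.1 (ht f)
      exact ⟨d, hd, fun _ => hball⟩
    · exact ⟨1, one_pos, fun h => absurd h hf⟩
  choose d hd hdsub using hchoice
  by_cases hne : Ifin.Nonempty
  · refine ⟨Ifin, Ifin.inf' hne d, ?_, ?_⟩
    · exact (Finset.lt_inf'_iff hne).2 fun f _ => hd f
    · intro x hxI
      apply hVsub
      refine htsub fun f hf => ?_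
      apply hdsub f hf
      rw [Metric.mem_ball, Real.dist_eq]
      have h1 : |f x - f x₀| < Ifin.inf' hne d :=
        hxI f (hIfin'.symm ▸ hIfin.mem_toFinset.2 hf)
      have h2 : Ifin.inf' hne d ≤ d f :=
        Finset.inf'_le d (hIfin'.symm ▸ hIfin.mem_toFinset.2 hf)
      have : B (toWeakSpace ℝ X x) f - B (toWeakSpace ℝ X x₀) f = f x - f x₀ := rfl
      show |B (toWeakSpace ℝ X x) f - B (toWeakSpace ℝ X x₀) f| < d f
      rw [this]
      linarith
  · refine ⟨Ifin, 1, one_pos, fun x _ => ?_⟩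
    apply hVsub
    refine htsub fun f hf => ?_
    exact absurd ⟨f, hIfin.mem_toFinset.2 hf⟩ hne


open Topology Filter in
lemma approx_pt {X : Type*} [NormedAddCommGroup X] [NormedSpace ℝ X]
    (Ifin : Finset (X →L[ℝ] ℝ)) (x₀ : X) (hx₀ : ‖x₀‖ ≤ 1)
    (y : X →L[ℝ] ℝ) (ε' : ℝ) (hε0 : 0 < ε') (hε1 : ε' < 1)
    (hy : ∀ x ∈ Submodule.span ℝ (Ifin : Set (X →L[ℝ] ℝ)),
      (1 - ε') * (|x x₀| + 1) ≤ ‖x + y‖)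
    (δ₂ : ℝ) (hδ₂ : 0 < δ₂) :
    ∃ z : X, ‖z‖ ≤ (1 - ε')⁻¹ ∧ (∀ k ∈ Ifin, |k z - k x₀| < δ₂) ∧ 1 - δ₂ < y z := by
  classical
  set E := Submodule.span ℝ (Ifin : Set (X →L[ℝ] ℝ)) with hE
  set r : ℝ := (1 - ε')⁻¹ with hr
  have h1ε : (0:ℝ) < 1 - ε' := by linarith
  have hrpos : 0 < r := by positivity
  have hr1 : 1 ≤ r := by
    rw [hr]
    have h2 : 1 - ε' ≤ 1 := by linarith
    calc (1:ℝ) = 1⁻¹ := by norm_num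
      _ ≤ (1 - ε')⁻¹ := by
          have := one_div_le_one_div_of_le h1ε h2
          simpa [one_div] using this
  -- key positive-case inequality
  have hpos : ∀ xE ∈ E, ∀ t : ℝ, 0 < t → (1 - ε') * (|xE x₀| + t) ≤ ‖xE + t • y‖ := by
    intro xE hxE t ht
    have h1 : ‖xE + t • y‖ = t * ‖t⁻¹ • xE + y‖ := by
      rw [← norm_smul_of_nonneg ht.le]
      congr 1
      rw [smul_add, smul_smul, mul_inv_cancel₀ ht.ne', one_smul]
    have h2 := hy (t⁻¹ • xE) (Submodule.smul_mem _ _ hxE)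
    have h3 : (t⁻¹ • xE) x₀ = t⁻¹ * xE x₀ := rfl
    rw [h3, abs_mul, abs_of_pos (by positivity : (0:ℝ) < t⁻¹)] at h2
    have h4 : t * ((1 - ε') * (t⁻¹ * |xE x₀| + 1)) = (1 - ε') * (|xE x₀| + t) := by
      field_simp
    calc (1 - ε') * (|xE x₀| + t) = t * ((1 - ε') * (t⁻¹ * |xE x₀| + 1)) := h4.symm
      _ ≤ t * ‖t⁻¹ • xE + y‖ := mul_le_mul_of_nonneg_left h2 ht.le
      _ = ‖xE + t • y‖ := h1.symm
  -- full key inequality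
  have hkey : ∀ xE ∈ E, ∀ t : ℝ, |xE x₀ + t| ≤ r * ‖xE + t • y‖ := by
    intro xE hxE t
    rcases lt_trichotomy t 0 with ht | rfl | ht
    · have hneg : ‖xE + t • y‖ = ‖(-xE) + (-t) • y‖ := by
        rw [← norm_neg]
        congr 1
        module
      have h2 := hpos (-xE) (Submodule.neg_mem _ hxE) (-t) (by linarith)
      have h3 : (-xE) x₀ = -(xE x₀) := rfl
      rw [h3, abs_neg] at h2
      rw [hneg]
      have h5 : |xE x₀ + t| ≤ |xE x₀| + (-t) := by
        have := abs_add_le (xE x₀) t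
        have : |t| = -t := abs_of_neg ht
        calc |xE x₀ + t| ≤ |xE x₀| + |t| := abs_add_le _ _
          _ = |xE x₀| + (-t) := by rw [this]
      calc |xE x₀ + t| ≤ |xE x₀| + (-t) := h5
        _ = r * ((1 - ε') * (|xE x₀| + (-t))) := by
            rw [hr]; field_simp
        _ ≤ r * ‖(-xE) + (-t) • y‖ := mul_le_mul_of_nonneg_left h2 hrpos.le
    · have h1 : |xE x₀| ≤ ‖xE‖ := by
        calc |xE x₀| ≤ ‖xE‖ * ‖x₀‖ := xE.le_opNorm x₀
          _ ≤ ‖xE‖ * 1 := mul_le_mul_of_nonneg_left hx₀ (norm_nonneg _)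
          _ = ‖xE‖ := mul_one _
      have : ‖xE‖ ≤ r * ‖xE‖ := by nlinarith [norm_nonneg xE]
      simpa using by linarith [h1]
    · have h2 := hpos xE hxE t ht
      have h5 : |xE x₀ + t| ≤ |xE x₀| + t := by
        calc |xE x₀ + t| ≤ |xE x₀| + |t| := abs_add_le _ _
          _ = |xE x₀| + t := by rw [abs_of_pos ht]
      calc |xE x₀ + t| ≤ |xE x₀| + t := h5
        _ = r * ((1 - ε') * (|xE x₀| + t)) := by rw [hr]; field_simp
        _ ≤ r * ‖xE + t • y‖ := mul_le_mul_of_nonneg_left h2 hrpos.le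
  -- apply closure lemma
  set φ : Option ↥Ifin → (X →L[ℝ] ℝ) := fun o => o.elim y (fun k => (k : X →L[ℝ] ℝ)) with hφ
  set p : Option ↥Ifin → ℝ := fun o => o.elim 1 (fun k => (k : X →L[ℝ] ℝ) x₀) with hp
  have hcl : p ∈ closure ((fun x o => φ o x) '' closedBall (0:X) r) := by
    refine mem_closure_image_ball φ r hrpos p fun a => ?_
    rw [Fintype.sum_option, Fintype.sum_option]
    set xE : X →L[ℝ] ℝ := ∑ k : ↥Ifin, a (some k) • (k : X →L[ℝ] ℝ) with hxE
    have hxEmem : xE ∈ E := by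
      refine Submodule.sum_mem _ fun k _ => Submodule.smul_mem _ _ ?_
      exact Submodule.subset_span k.2
    have h1 : ∑ k : ↥Ifin, a (some k) * p (some k) = xE x₀ := by
      rw [hxE]
      simp [ContinuousLinearMap.sum_apply, hp]
    have h2 : (a none • φ none + ∑ k : ↥Ifin, a (some k) • φ (some k)) = xE + a none • y := by
      rw [hφ, hxE]
      simp [add_comm]
    rw [h2]
    have h3 : a none * p none + ∑ k : ↥Ifin, a (some k) * p (some k) = xE x₀ + a none := by
      rw [h1, hp]; simp [add_comm]
    rw [h3]
    exact hkey xE hxEmem (a none)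
  rw [Metric.mem_closure_iff] at hcl
  obtain ⟨q, hq, hqd⟩ := hcl δ₂ hδ₂
  obtain ⟨z, hzball, rfl⟩ := hq
  refine ⟨z, by simpa using hzball, ?_, ?_⟩
  · intro k hk
    have := dist_le_pi_dist p (fun o => φ o z) (some ⟨k, hk⟩)
    rw [Real.dist_eq] at this
    have h := lt_of_le_of_lt this hqd
    simp only [hp, hφ, Option.elim] at h
    rw [abs_sub_comm] at h
    exact h
  · have := dist_le_pi_dist p (fun o => φ o z) none
    rw [Real.dist_eq] at this
    have h := lt_of_le_of_lt this hqd
    simp only [hp, hφ, Option.elim] at h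
    have := abs_lt.1 h
    linarith [this.2, this.1]


private lemma dir1 {X : Type*} [NormedAddCommGroup X] [NormedSpace ℝ X] [CompleteSpace X] [Nontrivial X]
    (hD : DiameterTwoProp X) : WeaklyOctahedral (StrongDual ℝ X) := by
  intro E hE F hF ε hε
  obtain ⟨x1, hx1⟩ := exists_ne (0 : X)
  obtain ⟨y0, hy0n, -⟩ := exists_dual_vector ℝ x1 (norm_ne_zero_iff.2 hx1)
  by_cases hε1 : 1 ≤ ε
  · refine ⟨y0, hy0n, fun x hx => ?_⟩
    have h1 : (1 - ε) ≤ 0 := by linarith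
    have h2 : (0:ℝ) ≤ |F x| + ‖y0‖ := by positivity
    nlinarith [norm_nonneg (x + y0)]
  push_neg at hε1
  haveI := hE
  set R : ℝ := 2 / ε with hR
  set δ : ℝ := ε / 8 with hδ
  have hδpos : 0 < δ := by positivity
  have hK : IsCompact ((Subtype.val : E → StrongDual ℝ X) '' closedBall 0 R) :=
    (isCompact_closedBall (0:E) R).image continuous_subtype_val
  obtain ⟨s, hs⟩ := hK.elim_finite_subcover (fun k : StrongDual ℝ X => ball k δ)
    (fun k => isOpen_ball) (fun x _ => mem_iUnion.2 ⟨x, mem_ball_self hδpos⟩)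
  classical
  -- Goldstine-type step
  have hGold : (fun k : ↥s => F k) ∈
      closure ((fun (x:X) (k : ↥s) => (k : X →L[ℝ] ℝ) x) '' closedBall (0:X) 1) := by
    refine mem_closure_image_ball _ 1 one_pos _ fun a => ?_
    have : ∑ k : ↥s, a k * F k = F (∑ k : ↥s, a k • (k : X →L[ℝ] ℝ)) := by
      rw [map_sum]
      exact Finset.sum_congr rfl fun k _ => by rw [map_smul, smul_eq_mul]
    rw [this, one_mul]
    calc |F (∑ k : ↥s, a k • (k : X →L[ℝ] ℝ))| ≤ ‖F‖ * ‖∑ k : ↥s, a k • (k : X →L[ℝ] ℝ)‖ :=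
          F.le_opNorm _
      _ ≤ ‖∑ k : ↥s, a k • (k : X →L[ℝ] ℝ)‖ := by
          nlinarith [norm_nonneg (∑ k : ↥s, a k • (k : X →L[ℝ] ℝ))]
  rw [Metric.mem_closure_iff] at hGold
  obtain ⟨q, hq, hqd⟩ := hGold δ hδpos
  obtain ⟨x₀, hx₀ball, rfl⟩ := hq
  have hx₀ : ‖x₀‖ ≤ 1 := by simpa using hx₀ball
  have hx₀k : ∀ k ∈ s, |F k - k x₀| < δ := by
    intro k hk
    have := dist_le_pi_dist (fun k : ↥s => F k) (fun k : ↥s => (k : X →L[ℝ] ℝ) x₀) ⟨k, hk⟩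
    rw [Real.dist_eq] at this
    exact lt_of_le_of_lt this hqd
  -- the relatively weakly open set
  set U : Set (WeakSpace ℝ X) :=
    ⋂ k ∈ s, {w | |(topDualPairing ℝ X).flip w k - k x₀| < δ} with hU
  have hUopen : IsOpen U := by
    refine isOpen_biInter_finset fun k _ => ?_
    have hc : Continuous fun w : WeakSpace ℝ X =>
        |(topDualPairing ℝ X).flip w k - k x₀| :=
      (((WeakBilin.eval_continuous ((topDualPairing ℝ X).flip) k)).sub continuous_const).abs
    exact hc.isOpen_preimage (Iio δ) isOpen_Iio
  have hmemU : ∀ x : X, toWeakSpace ℝ X x ∈ U ↔ ∀ k ∈ s, |k x - k x₀| < δ := by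
    intro x
    simp only [hU, Set.mem_iInter, Set.mem_setOf_eq]
    rfl
  have hne : {x : X | ‖x‖ ≤ 1 ∧ toWeakSpace ℝ X x ∈ U}.Nonempty := by
    refine ⟨x₀, hx₀, (hmemU x₀).2 fun k hk => by simpa using hδpos⟩
  have hdiam := hD U hUopen hne
  -- extract two far points
  have hfar : ∃ u ∈ {x : X | ‖x‖ ≤ 1 ∧ toWeakSpace ℝ X x ∈ U},
      ∃ v ∈ {x : X | ‖x‖ ≤ 1 ∧ toWeakSpace ℝ X x ∈ U}, 2 - δ < dist u v := by
    by_contra hcon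
    push_neg at hcon
    have : Metric.diam {x : X | ‖x‖ ≤ 1 ∧ toWeakSpace ℝ X x ∈ U} ≤ 2 - δ :=
      Metric.diam_le_of_forall_dist_le (by linarith) hcon
    rw [hdiam] at this; linarith
  obtain ⟨u, hu, v, hv, huv⟩ := hfar
  have huvne : u ≠ v := by
    intro h; rw [h, dist_self] at huv; linarith
  obtain ⟨g, hgn, hgval⟩ := exists_dual_vector ℝ (u - v) (norm_ne_zero_iff.2 (sub_ne_zero.2 huvne))
  have hgval' : g (u - v) = ‖u - v‖ := by exact_mod_cast hgval
  have hgu : 1 - δ < g u := by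
    have h1 : g u - g v = ‖u - v‖ := by rw [← hgval']; simp
    have h2 : dist u v = ‖u - v‖ := dist_eq_norm u v
    have h3 : |g v| ≤ 1 := by
      calc |g v| ≤ ‖g‖ * ‖v‖ := g.le_opNorm v
        _ ≤ 1 := by rw [hgn]; simpa using hv.1
    have := abs_le.1 h3
    linarith
  have hgv : g v < -(1 - δ) := by
    have h1 : g u - g v = ‖u - v‖ := by rw [← hgval']; simp
    have h2 : dist u v = ‖u - v‖ := dist_eq_norm u v
    have h3 : |g u| ≤ 1 := by
      calc |g u| ≤ ‖g‖ * ‖u‖ := g.le_opNorm u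
        _ ≤ 1 := by rw [hgn]; simpa using hu.1
    have := abs_le.1 h3
    linarith
  -- key estimate on net points
  have hkey : ∀ k ∈ s, |F k| + 1 - 3*δ ≤ ‖k + g‖ := by
    intro k hk
    have hku : |k u - k x₀| < δ := (hmemU u).1 hu.2 k hk
    have hkv : |k v - k x₀| < δ := (hmemU v).1 hv.2 k hk
    have hk₀ : |F k - k x₀| < δ := hx₀k k hk
    have hb1 : F k + 1 - 3*δ ≤ ‖k + g‖ := by
      have : (k + g) u ≤ ‖k + g‖ := by
        calc (k + g) u ≤ |(k + g) u| := le_abs_self _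
          _ ≤ ‖k + g‖ * ‖u‖ := (k + g).le_opNorm u
          _ ≤ ‖k + g‖ * 1 := by
              exact mul_le_mul_of_nonneg_left hu.1 (norm_nonneg _)
          _ = ‖k + g‖ := mul_one _
      have h2 : (k + g) u = k u + g u := rfl
      have := abs_lt.1 hku
      have := abs_lt.1 hk₀
      linarith [abs_lt.1 hku, abs_lt.1 hk₀]
    have hb2 : -(F k) + 1 - 3*δ ≤ ‖k + g‖ := by
      have : -((k + g) v) ≤ ‖k + g‖ := by
        calc -((k + g) v) ≤ |(k + g) v| := neg_le_abs _
          _ ≤ ‖k + g‖ * ‖v‖ := (k + g).le_opNorm v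
          _ ≤ ‖k + g‖ * 1 := mul_le_mul_of_nonneg_left hv.1 (norm_nonneg _)
          _ = ‖k + g‖ := mul_one _
      have h2 : (k + g) v = k v + g v := rfl
      linarith [abs_lt.1 hkv, abs_lt.1 hk₀]
    rcases abs_cases (F k) with ⟨h, -⟩ | ⟨h, -⟩
    · rw [h] at *; linarith
    · rw [h]; linarith
  -- conclude
  refine ⟨g, hgn, fun x hx => ?_⟩
  rw [hgn]
  by_cases hxR : R ≤ ‖x‖
  · have h1 : |F x| ≤ ‖x‖ := by
      calc |F x| ≤ ‖F‖ * ‖x‖ := F.le_opNorm x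
        _ ≤ 1 * ‖x‖ := mul_le_mul_of_nonneg_right hF (norm_nonneg _)
        _ = ‖x‖ := one_mul _
    have h2 : ‖x‖ - 1 ≤ ‖x + g‖ := by
      have h := norm_add_le (x + g) (-g)
      have he : x + g + (-g) = x := by abel
      rw [he, norm_neg, hgn] at h
      linarith
    have h3 : 2 ≤ ε * ‖x‖ := by
      rw [hR] at hxR
      calc (2:ℝ) = ε * (2/ε) := by field_simp
        _ ≤ ε * ‖x‖ := mul_le_mul_of_nonneg_left hxR hε.le
    have e1 : (1-ε)*(|F x|+1) ≤ (1-ε)*(‖x‖+1) :=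
      mul_le_mul_of_nonneg_left (by linarith) (by linarith)
    have e2 : (1-ε)*(‖x‖+1) = ‖x‖ + 1 - ε*‖x‖ - ε := by ring
    linarith
  · push_neg at hxR
    have hxK : x ∈ (Subtype.val : E → StrongDual ℝ X) '' closedBall 0 R := by
      refine ⟨⟨x, hx⟩, ?_, rfl⟩
      rw [mem_closedBall_zero_iff]
      exact_mod_cast hxR.le
    obtain ⟨_, ⟨k, rfl⟩, hmem2⟩ := hs hxK
    simp only [Set.mem_iUnion] at hmem2
    obtain ⟨hk, hxk⟩ := hmem2
    rw [mem_ball, dist_eq_norm] at hxk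
    have h1 : ‖k + g‖ - ‖x - k‖ ≤ ‖x + g‖ := by
      have h := norm_sub_le (x + g) (x - k)
      have he : x + g - (x - k) = k + g := by abel
      rw [he] at h
      linarith
    have h2 : |F k| ≥ |F x| - δ := by
      have : |F x - F k| ≤ ‖F‖ * ‖x - k‖ := by
        rw [← map_sub]; exact F.le_opNorm _
      have h3 : ‖F‖ * ‖x - k‖ ≤ 1 * ‖x - k‖ := mul_le_mul_of_nonneg_right hF (norm_nonneg _)
      have := abs_sub_abs_le_abs_sub (F x) (F k)
      linarith
    have h4 : |F x| + 1 - 5*δ ≤ ‖x + g‖ := by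
      have := hkey k hk
      linarith
    have h5 : 5*δ ≤ ε * (|F x| + 1) := by
      have h6 : ε * 1 ≤ ε * (|F x| + 1) :=
        mul_le_mul_of_nonneg_left (by linarith [abs_nonneg (F x)]) hε.le
      rw [hδ]; linarith
    have e2 : (1-ε)*(|F x|+1) = (|F x| + 1) - ε*(|F x|+1) := by ring
    linarith

private lemma dir2 {X : Type*} [NormedAddCommGroup X] [NormedSpace ℝ X] [CompleteSpace X] [Nontrivial X]
    (hW : WeaklyOctahedral (StrongDual ℝ X)) : DiameterTwoProp X := by
  intro U hU hne
  obtain ⟨x₀, hx₀1, hx₀U⟩ := hne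
  obtain ⟨Ifin, δ, hδ, hbasic⟩ := exists_basic_nbhd U hU x₀ hx₀U
  set S := {x : X | ‖x‖ ≤ 1 ∧ toWeakSpace ℝ X x ∈ U} with hS
  have hbdd : Bornology.IsBounded S := by
    refine (Metric.isBounded_closedBall (x := (0:X)) (r := 1)).subset fun x hx => ?_
    simpa using hx.1
  have hub : Metric.diam S ≤ 2 := by
    refine Metric.diam_le_of_forall_dist_le zero_le_two fun x hx y hy => ?_
    rw [dist_eq_norm]
    calc ‖x - y‖ ≤ ‖x‖ + ‖y‖ := norm_sub_le _ _
      _ ≤ 2 := by linarith [hx.1, hy.1]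
  have hlow : ∀ η : ℝ, 0 < η → η ≤ 1 → 2 - η ≤ Metric.diam S := by
    intro η hη hη1
    obtain ⟨M, hM0, hMf⟩ : ∃ M : ℝ, 0 ≤ M ∧ ∀ f ∈ Ifin, ‖f‖ ≤ M :=
      ⟨∑ f ∈ Ifin, ‖f‖, Finset.sum_nonneg fun f _ => norm_nonneg f,
        fun f hf => Finset.single_le_sum (fun g _ => norm_nonneg g) hf⟩
    obtain ⟨ε', hε'pos, hε'lt1, hε'δ, hε'η⟩ :
        ∃ e : ℝ, 0 < e ∧ e < 1 ∧ e ≤ δ / (2 * (M + 1)) ∧ e ≤ η / 8 := by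
      refine ⟨min (δ / (2 * (M + 1))) (min (η / 8) (1 / 2)), ?_, ?_, min_le_left _ _,
        le_trans (min_le_right _ _) (min_le_left _ _)⟩
      · exact lt_min (by positivity) (lt_min (by positivity) (by positivity))
      · exact lt_of_le_of_lt (le_trans (min_le_right _ _) (min_le_right _ _)) (by norm_num)
    obtain ⟨δ₂, hδ₂pos, hδ₂δ, hδ₂η⟩ : ∃ d : ℝ, 0 < d ∧ d ≤ δ / 2 ∧ d ≤ η / 8 :=
      ⟨min (δ / 2) (η / 8), lt_min (by positivity) (by positivity), min_le_left _ _,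
        min_le_right _ _⟩
    set E : Submodule ℝ (X →L[ℝ] ℝ) := Submodule.span ℝ (Ifin : Set (X →L[ℝ] ℝ)) with hE
    haveI : FiniteDimensional ℝ E := FiniteDimensional.span_of_finite ℝ Ifin.finite_toSet
    obtain ⟨ystar, hysn, hys⟩ := hW E inferInstance
      (NormedSpace.inclusionInDoubleDual ℝ X x₀)
      (le_trans (NormedSpace.double_dual_bound ℝ X x₀) hx₀1) ε' hε'pos
    have hyt : ∀ x ∈ E, (1 - ε') * (|x x₀| + 1) ≤ ‖x + ystar‖ := by
      intro x hx
      have := hys x hx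
      rwa [NormedSpace.dual_def, hysn] at this
    have hytneg : ∀ x ∈ E, (1 - ε') * (|x x₀| + 1) ≤ ‖x + (-ystar)‖ := by
      intro x hx
      have h := hyt (-x) (Submodule.neg_mem _ hx)
      have h2 : (-x) x₀ = -(x x₀) := rfl
      rw [h2, abs_neg] at h
      have h3 : ‖-x + ystar‖ = ‖x + -ystar‖ := by
        rw [← norm_neg]
        congr 1
        abel
      rwa [h3] at h
    obtain ⟨z₁, hz₁n, hz₁k, hz₁y⟩ := approx_pt Ifin x₀ hx₀1 ystar ε' hε'pos hε'lt1 hyt δ₂ hδ₂pos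
    obtain ⟨z₂, hz₂n, hz₂k, hz₂y⟩ := approx_pt Ifin x₀ hx₀1 (-ystar) ε' hε'pos hε'lt1 hytneg δ₂ hδ₂pos
    have h1ε : (0:ℝ) < 1 - ε' := by linarith
    set u : X := (1 - ε') • z₁ with hu
    set v : X := (1 - ε') • z₂ with hv
    have hnorm1 : ‖u‖ ≤ 1 := by
      rw [hu, norm_smul_of_nonneg h1ε.le]
      calc (1 - ε') * ‖z₁‖ ≤ (1 - ε') * (1 - ε')⁻¹ :=
            mul_le_mul_of_nonneg_left hz₁n h1ε.le
        _ = 1 := mul_inv_cancel₀ h1ε.ne'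
    have hnorm2 : ‖v‖ ≤ 1 := by
      rw [hv, norm_smul_of_nonneg h1ε.le]
      calc (1 - ε') * ‖z₂‖ ≤ (1 - ε') * (1 - ε')⁻¹ :=
            mul_le_mul_of_nonneg_left hz₂n h1ε.le
        _ = 1 := mul_inv_cancel₀ h1ε.ne'
    -- membership in basic neighborhood
    have hmem : ∀ z : X, (∀ k ∈ Ifin, |k z - k x₀| < δ₂) →
        ∀ f ∈ Ifin, |f ((1 - ε') • z) - f x₀| < δ := by
      intro z hz f hf
      have h1 : f ((1 - ε') • z) - f x₀ = (1 - ε') * (f z - f x₀) - ε' * f x₀ := by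
        rw [map_smul]
        simp only [smul_eq_mul]
        ring
      rw [h1]
      have h2 : |(1 - ε') * (f z - f x₀) - ε' * f x₀|
          ≤ (1 - ε') * |f z - f x₀| + ε' * |f x₀| := by
        calc |(1 - ε') * (f z - f x₀) - ε' * f x₀|
            ≤ |(1 - ε') * (f z - f x₀)| + |ε' * f x₀| := abs_sub _ _
          _ = (1 - ε') * |f z - f x₀| + ε' * |f x₀| := by
              rw [abs_mul, abs_mul, abs_of_pos h1ε, abs_of_pos hε'pos]
      have h3 : |f x₀| ≤ M := by
        calc |f x₀| ≤ ‖f‖ * ‖x₀‖ := f.le_opNorm x₀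
          _ ≤ ‖f‖ * 1 := mul_le_mul_of_nonneg_left hx₀1 (norm_nonneg _)
          _ = ‖f‖ := mul_one _
          _ ≤ M := hMf f hf
      have h4 : (1 - ε') * |f z - f x₀| < δ₂ := by
        calc (1 - ε') * |f z - f x₀| ≤ 1 * |f z - f x₀| :=
              mul_le_mul_of_nonneg_right (by linarith) (abs_nonneg _)
          _ = |f z - f x₀| := one_mul _
          _ < δ₂ := hz f hf
      have h5 : ε' * |f x₀| ≤ δ / 2 := by
        calc ε' * |f x₀| ≤ (δ / (2 * (M + 1))) * M := by
              apply mul_le_mul hε'δ h3 (abs_nonneg _) (by positivity)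
          _ ≤ δ / 2 := by
              rw [div_mul_eq_mul_div, div_le_div_iff₀ (by positivity) (by norm_num)]
              nlinarith
      linarith
    have huS : u ∈ S := ⟨hnorm1, hbasic u (hmem z₁ hz₁k)⟩
    have hvS : v ∈ S := ⟨hnorm2, hbasic v (hmem z₂ hz₂k)⟩
    -- functional values
    have hyu : 1 - η / 4 ≤ ystar u := by
      have h1 : ystar u = (1 - ε') * ystar z₁ := by
        rw [hu, map_smul, smul_eq_mul]
      rw [h1]
      nlinarith [hz₁y, hδ₂pos, hε'η, hδ₂η, hη]
    have hyv : ystar v ≤ -(1 - η / 4) := by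
      have h1 : ystar v = (1 - ε') * ystar z₂ := by
        rw [hv, map_smul, smul_eq_mul]
      have h2 : (-ystar) z₂ = -(ystar z₂) := rfl
      have h3 : 1 - δ₂ < -(ystar z₂) := h2 ▸ hz₂y
      rw [h1]
      nlinarith [hδ₂pos, hε'η, hδ₂η, hη]
    have hdist : 2 - η ≤ dist u v := by
      have h1 : ystar (u - v) = ystar u - ystar v := by rw [map_sub]
      have h2 : ystar (u - v) ≤ ‖ystar‖ * ‖u - v‖ := le_trans (le_abs_self _) ((ystar).le_opNorm _)
      rw [hysn, one_mul] at h2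
      rw [dist_eq_norm]
      linarith [h1 ▸ h2]
    calc 2 - η ≤ dist u v := hdist
      _ ≤ Metric.diam S := Metric.dist_le_diam_of_mem hbdd huS hvS
  refine le_antisymm hub ?_
  by_contra hc
  push_neg at hc
  have hd0 : 0 ≤ Metric.diam S := Metric.diam_nonneg
  set η : ℝ := min 1 ((2 - Metric.diam S) / 2) with hη
  have hηpos : 0 < η := lt_min one_pos (by linarith)
  have := hlow η hηpos (min_le_left _ _)
  have hη2 : η ≤ (2 - Metric.diam S) / 2 := min_le_right _ _
  linarith

theorem stmt_8 (X : Type*) [NormedAddCommGroup X] [NormedSpace ℝ X] [CompleteSpace X] [Nontrivial X] :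
    DiameterTwoProp X ↔ WeaklyOctahedral (StrongDual ℝ X) := by
  exact ⟨dir1, dir2⟩
end
end

section
/- For a nontrivial real Banach space X: the dual X* has the weak* strong diameter 2 property if and only if X is octahedral. -/
open Metric Set

noncomputable section

lemma unit_norm' {X : Type*} [NormedAddCommGroup X] [NormedSpace ℝ X] {x : X} (hx : x ≠ 0) :
    ‖(‖x‖⁻¹ : ℝ) • x‖ = 1 := by
  rw [norm_smul, Real.norm_eq_abs, abs_of_nonneg (by positivity)]
  exact inv_mul_cancel₀ (norm_ne_zero_iff.2 hx)

set_option maxHeartbeats 4000000 in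
theorem sd2p_to_oct (X : Type*) [NormedAddCommGroup X] [NormedSpace ℝ X] [Nontrivial X]
    (H : WStarStrongDiameterTwoProp X) : Octahedral X := by
  classical
  intro E hEfd ε hε
  obtain ⟨x₀, hx₀⟩ := exists_ne (0 : X)
  by_cases hEtriv : ∀ x ∈ E, x = (0:X)
  · have h1 := unit_norm' hx₀
    refine ⟨(‖x₀‖⁻¹ : ℝ) • x₀, h1, fun x hx => ?_⟩
    rw [hEtriv x hx, zero_add, norm_zero, zero_add, h1]
    nlinarith
  push_neg at hEtriv
  obtain ⟨v, hvE, hv0⟩ := hEtriv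
  set δ : ℝ := min (ε/2) (1/4) with hδdef
  have hδ0 : 0 < δ := lt_min (by linarith) (by norm_num)
  have hδε : δ ≤ ε/2 := min_le_left _ _
  have hδ4 : δ ≤ 1/4 := min_le_right _ _
  -- finite net of the sphere of E
  haveI := hEfd
  have hcomp : IsCompact (sphere (0:E) 1) := isCompact_sphere 0 1
  obtain ⟨t, ht⟩ := hcomp.elim_finite_subcover
    (fun u : sphere (0:E) 1 => Metric.ball (u : E) (δ/2))
    (fun _ => Metric.isOpen_ball)
    (fun u hu => Set.mem_iUnion.2 ⟨⟨u, hu⟩, Metric.mem_ball_self (by linarith)⟩)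
  have hvE' : (⟨v, hvE⟩ : E) ≠ 0 := by
    simp only [ne_eq, Submodule.mk_eq_zero]; exact hv0
  have hsph : ((‖(⟨v,hvE⟩:E)‖⁻¹ : ℝ) • (⟨v,hvE⟩:E)) ∈ sphere (0:E) 1 := by
    rw [mem_sphere_zero_iff_norm]; exact unit_norm' hvE'
  have htne : t.Nonempty := by
    by_contra h
    rw [Finset.not_nonempty_iff_eq_empty] at h
    have := ht hsph
    simp [h] at this
  set n := t.card with hn
  have hn0 : 0 < n := Finset.card_pos.2 htne
  have hnR : (0:ℝ) < n := by exact_mod_cast hn0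
  set e := t.equivFin with he
  set xi : Fin n → X := fun j => (((e.symm j : t) : sphere (0:E) 1) : E) with hxi
  have hxinorm : ∀ j, ‖xi j‖ = 1 := by
    intro j
    have h2 : ((e.symm j : t) : sphere (0:E) 1).1 ∈ sphere (0:E) 1 :=
      ((e.symm j : t) : sphere (0:E) 1).2
    rw [mem_sphere_zero_iff_norm] at h2
    exact h2
  set ρ : ℝ := min (δ/(2*(n+1))) (1/2) with hρdef
  have hρ0 : 0 < ρ := lt_min (by positivity) (by norm_num)
  have hρhalf : ρ ≤ 1/2 := min_le_right _ _
  have hρδ : (n+1) * ρ ≤ δ/2 := by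
    have h1 : ρ ≤ δ/(2*(n+1)) := min_le_left _ _
    have h2 : (0:ℝ) < 2*((n:ℝ)+1) := by positivity
    rw [le_div_iff₀ h2] at h1
    nlinarith
  have hsum1 : ∑ _i : Fin n, (n:ℝ)⁻¹ = 1 := by
    rw [Finset.sum_const, Finset.card_univ, Fintype.card_fin, nsmul_eq_mul,
      mul_inv_cancel₀ (ne_of_gt hnR)]
  have hdiam := H n (fun _ => (n:ℝ)⁻¹) xi (fun _ => ρ)
    (fun _ => inv_nonneg.2 hnR.le) hsum1 hxinorm (fun _ => hρ0)
  set S := {f : X →L[ℝ] ℝ | ∃ g : Fin n → (X →L[ℝ] ℝ),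
      (∀ i, ‖g i‖ ≤ 1 ∧ 1 - ρ < g i (xi i)) ∧ f = ∑ i, (n:ℝ)⁻¹ • g i} with hSdef
  have hpair : ∃ F ∈ S, ∃ G ∈ S, 2 - ρ < dist F G := by
    by_contra h
    push_neg at h
    have hle : Metric.diam S ≤ 2 - ρ :=
      Metric.diam_le_of_forall_dist_le (by linarith) h
    rw [hdiam] at hle
    linarith
  obtain ⟨F, ⟨f, hf, hFdef⟩, G, ⟨g, hg, hGdef⟩, hFG⟩ := hpair
  rw [dist_eq_norm] at hFG
  -- find y' with (F-G) y' > 2 - ρ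
  have hy'ex : ∃ y' : X, ‖y'‖ ≤ 1 ∧ 2 - ρ < (F - G) y' := by
    by_contra h
    push_neg at h
    have hbound : ‖F - G‖ ≤ 2 - ρ := by
      refine ContinuousLinearMap.opNorm_le_bound _ (by linarith) fun z => ?_
      rcases eq_or_ne z 0 with rfl | hz
      · simp
      · set w := (‖z‖⁻¹ : ℝ) • z with hw
        have hwn : ‖w‖ = 1 := unit_norm' hz
        have h1 : (F - G) w ≤ 2 - ρ := h w (le_of_eq hwn)
        have h2 : (F - G) (-w) ≤ 2 - ρ := by
          refine h (-w) ?_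
          rw [norm_neg]; exact le_of_eq hwn
        rw [map_neg] at h2
        have habs : |(F - G) w| ≤ 2 - ρ := abs_le.2 ⟨by linarith, h1⟩
        have hzw : z = ‖z‖ • w := by
          rw [hw, smul_smul, mul_inv_cancel₀ (norm_ne_zero_iff.2 hz), one_smul]
        calc ‖(F - G) z‖ = ‖(F - G) (‖z‖ • w)‖ := by rw [← hzw]
          _ = ‖z‖ * ‖(F - G) w‖ := by rw [map_smul]; simp [norm_smul]
          _ ≤ ‖z‖ * (2 - ρ) := by
              refine mul_le_mul_of_nonneg_left ?_ (norm_nonneg z)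
              rwa [Real.norm_eq_abs]
          _ = (2 - ρ) * ‖z‖ := by ring
    linarith
  obtain ⟨y', hy'1, hy'2⟩ := hy'ex
  have hy'0 : y' ≠ 0 := by
    rintro rfl
    simp at hy'2
    linarith
  obtain ⟨y, hy1, hyval⟩ : ∃ y : X, ‖y‖ = 1 ∧ 2 - ρ < (F - G) y := by
    refine ⟨(‖y'‖⁻¹ : ℝ) • y', unit_norm' hy'0, ?_⟩
    have hpos : 0 < (F - G) y' := by linarith
    have hinv : 1 ≤ ‖y'‖⁻¹ := by
      rw [le_inv_comm₀] <;> first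
        | exact norm_pos_iff.2 hy'0
        | simpa using hy'1
    have heq : (F - G) ((‖y'‖⁻¹ : ℝ) • y') = ‖y'‖⁻¹ * (F - G) y' := by
      rw [map_smul]; simp
    rw [heq]
    nlinarith
  -- per-coordinate estimates
  have happ : (F - G) y = ∑ i, (n:ℝ)⁻¹ * (f i y - g i y) := by
    rw [hFdef, hGdef]
    simp [ContinuousLinearMap.sub_apply, ContinuousLinearMap.sum_apply,
      ContinuousLinearMap.smul_apply, mul_sub, Finset.sum_sub_distrib]
  have hterm : ∀ i, (n:ℝ)⁻¹ * (f i y - g i y) ≤ (n:ℝ)⁻¹ * 2 := by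
    intro i
    have hfi : f i y ≤ 1 := by
      calc f i y ≤ ‖f i y‖ := le_abs_self _
        _ ≤ ‖f i‖ * ‖y‖ := (f i).le_opNorm y
        _ ≤ 1 := by rw [hy1, mul_one]; exact (hf i).1
    have hgi : -(g i y) ≤ 1 := by
      calc -(g i y) ≤ ‖g i y‖ := neg_le_abs _
        _ ≤ ‖g i‖ * ‖y‖ := (g i).le_opNorm y
        _ ≤ 1 := by rw [hy1, mul_one]; exact (hg i).1
    have h2 : f i y - g i y ≤ 2 := by linarith
    have hninv : (0:ℝ) ≤ (n:ℝ)⁻¹ := inv_nonneg.2 hnR.le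
    exact mul_le_mul_of_nonneg_left h2 hninv
  have hfy : ∀ j, 1 - n * ρ < f j y := by
    intro j
    have hsplit : ∑ i, (n:ℝ)⁻¹ * (f i y - g i y)
        = (n:ℝ)⁻¹ * (f j y - g j y) + ∑ i ∈ Finset.univ.erase j, (n:ℝ)⁻¹ * (f i y - g i y) := by
      rw [← Finset.add_sum_erase _ _ (Finset.mem_univ j)]
    have hrest : ∑ i ∈ Finset.univ.erase j, (n:ℝ)⁻¹ * (f i y - g i y)
        ≤ (n - 1) * ((n:ℝ)⁻¹ * 2) := by
      have := Finset.sum_le_card_nsmul (Finset.univ.erase j)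
        (fun i => (n:ℝ)⁻¹ * (f i y - g i y)) ((n:ℝ)⁻¹ * 2) (fun i _ => hterm i)
      rw [Finset.card_erase_of_mem (Finset.mem_univ j), Finset.card_univ, Fintype.card_fin] at this
      have hcast : ((n - 1 : ℕ) : ℝ) = (n:ℝ) - 1 := by
        have : (1:ℕ) ≤ n := hn0
        push_cast [this]
        ring
      calc ∑ i ∈ Finset.univ.erase j, (n:ℝ)⁻¹ * (f i y - g i y)
          ≤ (n - 1 : ℕ) • ((n:ℝ)⁻¹ * 2) := this
        _ = ((n - 1 : ℕ) : ℝ) * ((n:ℝ)⁻¹ * 2) := by rw [nsmul_eq_mul]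
        _ = (n - 1) * ((n:ℝ)⁻¹ * 2) := by rw [hcast]
    have hkey : 2 - ρ - (n - 1) * ((n:ℝ)⁻¹ * 2) < (n:ℝ)⁻¹ * (f j y - g j y) := by
      have := hyval
      rw [happ, hsplit] at this
      linarith
    have hnn : (n:ℝ) * (n:ℝ)⁻¹ = 1 := mul_inv_cancel₀ (ne_of_gt hnR)
    have hrw : ((n:ℝ) - 1) * ((n:ℝ)⁻¹ * 2) = 2 - 2 * (n:ℝ)⁻¹ := by
      linear_combination 2 * hnn
    rw [hrw] at hkey
    have hmul := mul_lt_mul_of_pos_left hkey hnR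
    have e1 : (n:ℝ) * (2 - ρ - (2 - 2 * (n:ℝ)⁻¹)) = 2 - n * ρ := by
      linear_combination 2 * hnn
    have e2 : (n:ℝ) * ((n:ℝ)⁻¹ * (f j y - g j y)) = f j y - g j y := by
      rw [← mul_assoc, hnn, one_mul]
    rw [e1, e2] at hmul
    have h1 : 2 - n * ρ < f j y - g j y := hmul
    have hgj : -(g j y) ≤ 1 := by
      calc -(g j y) ≤ ‖g j y‖ := neg_le_abs _
        _ ≤ ‖g j‖ * ‖y‖ := (g j).le_opNorm y
        _ ≤ 1 := by rw [hy1, mul_one]; exact (hg j).1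
    linarith
  have hxiy : ∀ j, 2 - δ/2 < ‖xi j + y‖ := by
    intro j
    have h1 : f j (xi j + y) ≤ ‖xi j + y‖ := by
      calc f j (xi j + y) ≤ ‖f j (xi j + y)‖ := le_abs_self _
        _ ≤ ‖f j‖ * ‖xi j + y‖ := (f j).le_opNorm _
        _ ≤ ‖xi j + y‖ := by
            refine mul_le_of_le_one_left (norm_nonneg _) (hf j).1
    have h2 : 1 - ρ < f j (xi j) := (hf j).2
    have h3 := hfy j
    have h4 : f j (xi j + y) = f j (xi j) + f j y := map_add _ _ _
    have : 2 - (n+1)*ρ < f j (xi j + y) := by rw [h4]; push_cast; nlinarith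
    have := lt_of_lt_of_le this h1
    linarith [hρδ]
  -- every unit vector of E is close to some xi j
  have hsphere : ∀ u : E, ‖u‖ = 1 → 2 - δ ≤ ‖(u : X) + y‖ := by
    intro u hu
    have humem : u ∈ sphere (0:E) 1 := by rwa [mem_sphere_zero_iff_norm]
    have := ht humem
    rw [Set.mem_iUnion₂] at this
    obtain ⟨w, hw, hball⟩ := this
    rw [Metric.mem_ball, dist_eq_norm] at hball
    set j : Fin n := e ⟨w, hw⟩ with hj
    have hxij : xi j = ((w : E) : X) := by
      rw [hxi]
      simp [hj, Equiv.symm_apply_apply]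
    have hclose : ‖(u : X) - xi j‖ < δ/2 := by
      rw [hxij]
      have : ((u - (w:E) : E) : X) = (u : X) - ((w:E) : X) := by push_cast; ring
      rw [← this]
      exact hball
    have htri : ‖xi j + y‖ - ‖(u:X) - xi j‖ ≤ ‖(u:X) + y‖ := by
      have := norm_sub_norm_le (xi j + y) ((xi j) - (u:X))
      have heq : xi j + y - (xi j - (u:X)) = (u:X) + y := by abel
      rw [heq] at this
      have : ‖xi j + y‖ - ‖xi j - (u:X)‖ ≤ ‖(u:X) + y‖ := by linarith
      rwa [norm_sub_rev (xi j)] at this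
    have := hxiy j
    linarith
  -- conclude
  refine ⟨y, hy1, fun x hx => ?_⟩
  rcases eq_or_ne x 0 with rfl | hx0
  · rw [zero_add, norm_zero, zero_add, hy1]
    nlinarith
  · set T : ℝ := ‖x‖ with hT
    have hT0 : 0 < T := norm_pos_iff.2 hx0
    set u : X := (T⁻¹ : ℝ) • x with hu
    have humem : u ∈ E := Submodule.smul_mem E _ hx
    have hunorm : ‖u‖ = 1 := unit_norm' hx0
    have huE : ‖(⟨u, humem⟩ : E)‖ = 1 := hunorm
    have hkey : 2 - δ ≤ ‖u + y‖ := hsphere ⟨u, humem⟩ huE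
    have hxu : x = T • u := by
      rw [hu, smul_smul, mul_inv_cancel₀ (ne_of_gt hT0), one_smul]
    rw [hy1]
    rcases le_or_gt T 1 with hTle | hTgt
    · -- small case
      have h1 : ‖u + y‖ - ‖u - x‖ ≤ ‖x + y‖ := by
        have := norm_sub_norm_le (u + y) (u - x)
        have heq : u + y - (u - x) = x + y := by abel
        rw [heq] at this
        linarith
      have h2 : ‖u - x‖ = 1 - T := by
        rw [hxu]
        have : u - T • u = (1 - T) • u := by
          rw [sub_smul, one_smul]
        rw [this, norm_smul, hunorm, Real.norm_eq_abs, abs_of_nonneg (by linarith), mul_one]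
      rw [h2] at h1
      nlinarith
    · -- big case
      have hTinv : 0 < T⁻¹ := by positivity
      have hid : u + y = (1 - T⁻¹) • y + T⁻¹ • (x + y) := by
        rw [hxu, smul_add, smul_smul, inv_mul_cancel₀ (ne_of_gt hT0), one_smul,
          sub_smul, one_smul]
        abel
      have hub : ‖u + y‖ ≤ (1 - T⁻¹) + T⁻¹ * ‖x + y‖ := by
        rw [hid]
        calc ‖(1 - T⁻¹) • y + T⁻¹ • (x + y)‖
            ≤ ‖(1 - T⁻¹) • y‖ + ‖T⁻¹ • (x + y)‖ := norm_add_le _ _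
          _ = (1 - T⁻¹) + T⁻¹ * ‖x + y‖ := by
              rw [norm_smul, norm_smul, hy1, Real.norm_eq_abs, Real.norm_eq_abs]
              have hi1 : T⁻¹ ≤ 1 := by
                rw [inv_le_one_iff₀]; right; linarith
              rw [abs_of_nonneg (by linarith), abs_of_nonneg (le_of_lt hTinv)]
              ring
      have hcomb : 2 - δ ≤ (1 - T⁻¹) + T⁻¹ * ‖x + y‖ := le_trans hkey hub
      have hmul := mul_le_mul_of_nonneg_left hcomb (le_of_lt hT0)
      have hTT : T * T⁻¹ = 1 := mul_inv_cancel₀ (ne_of_gt hT0)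
      nlinarith [norm_nonneg (x + y)]


set_option maxHeartbeats 1000000 in
theorem oct_to_sd2p (X : Type*) [NormedAddCommGroup X] [NormedSpace ℝ X] [CompleteSpace X]
    (H : Octahedral X) : WStarStrongDiameterTwoProp X := by
  intro n lam x α hlam hsum hx hα
  set S := {f : X →L[ℝ] ℝ | ∃ g : Fin n → (X →L[ℝ] ℝ),
      (∀ i, ‖g i‖ ≤ 1 ∧ 1 - α i < g i (x i)) ∧ f = ∑ i, lam i • g i} with hS
  have hn : n ≠ 0 := by
    rintro rfl; simp at hsum
  haveI : NeZero n := ⟨hn⟩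
  have hne : (Finset.univ : Finset (Fin n)).Nonempty := Finset.univ_nonempty
  -- S ⊆ closedBall 0 1
  have hsub : S ⊆ Metric.closedBall (0 : X →L[ℝ] ℝ) 1 := by
    rintro f ⟨g, hg, rfl⟩
    simp only [Metric.mem_closedBall, dist_zero_right]
    calc ‖∑ i, lam i • g i‖ ≤ ∑ i, ‖lam i • g i‖ := norm_sum_le _ _
      _ ≤ ∑ i, lam i := by
          refine Finset.sum_le_sum fun i _ => ?_
          calc ‖lam i • g i‖ ≤ ‖lam i‖ * ‖g i‖ := norm_smul_le (lam i) (g i)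
            _ ≤ lam i := by
              rw [Real.norm_eq_abs, abs_of_nonneg (hlam i)]
              exact mul_le_of_le_one_right (hlam i) (hg i).1
      _ = 1 := hsum
  have hbdd : Bornology.IsBounded S := Metric.isBounded_closedBall.subset hsub
  have hle : Metric.diam S ≤ 2 := by
    have := Metric.diam_mono hsub Metric.isBounded_closedBall
    have h2 : Metric.diam (Metric.closedBall (0 : X →L[ℝ] ℝ) 1) ≤ 2 * 1 :=
      Metric.diam_closedBall (by norm_num)
    linarith
  refine le_antisymm hle (le_of_forall_pos_le_add fun ε hε => ?_)
  -- choose ε₀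
  set m := Finset.univ.inf' hne α with hm
  have hm0 : 0 < m := by
    rw [hm, Finset.lt_inf'_iff]
    exact fun i _ => hα i
  set ε₀ : ℝ := min (min (ε/4) (m/3)) (1/2) with hε₀def
  have hε₀ : 0 < ε₀ := by
    simp only [hε₀def, lt_min_iff]
    refine ⟨⟨by linarith, by linarith⟩, by norm_num⟩
  have hε₀half : ε₀ ≤ 1/2 := min_le_right _ _
  have hε₀ε : ε₀ ≤ ε/4 := le_trans (min_le_left _ _) (min_le_left _ _)
  have hε₀m : ε₀ ≤ m/3 := le_trans (min_le_left _ _) (min_le_right _ _)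
  -- octahedral
  obtain ⟨y, hy1, hy2⟩ := H (Submodule.span ℝ (Set.range x))
    (Module.Finite.span_of_finite ℝ (Set.finite_range x)) ε₀ hε₀
  have hxy : ∀ i, 2 - 2*ε₀ ≤ ‖x i + y‖ := by
    intro i
    have hmem : x i ∈ Submodule.span ℝ (Set.range x) :=
      Submodule.subset_span ⟨i, rfl⟩
    have := hy2 (x i) hmem
    rw [hx i, hy1] at this
    linarith
  have hxy' : ∀ i, 2 - 2*ε₀ ≤ ‖x i - y‖ := by
    intro i
    have hmem : -(x i) ∈ Submodule.span ℝ (Set.range x) :=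
      Submodule.neg_mem _ (Submodule.subset_span ⟨i, rfl⟩)
    have := hy2 (-(x i)) hmem
    rw [norm_neg, hx i, hy1] at this
    have heq : -(x i) + y = -(x i - y) := by abel
    rw [heq, norm_neg] at this
    linarith
  have hne0 : ∀ i, x i + y ≠ 0 := by
    intro i h
    have := hxy i; rw [h, norm_zero] at this; linarith
  have hne0' : ∀ i, x i - y ≠ 0 := by
    intro i h
    have := hxy' i; rw [h, norm_zero] at this; linarith
  choose f hf1 hf2 using fun i => exists_dual_vector ℝ (x i + y) (norm_ne_zero_iff.2 (hne0 i))
  choose g hg1 hg2 using fun i => exists_dual_vector ℝ (x i - y) (norm_ne_zero_iff.2 (hne0' i))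
  -- slice estimates
  have hfx : ∀ i, 1 - 2*ε₀ ≤ f i (x i) := by
    intro i
    have h1 : f i (x i) + f i y = ‖x i + y‖ := by
      rw [← map_add]; exact hf2 i
    have h2 : f i y ≤ 1 := by
      calc f i y ≤ ‖f i y‖ := le_abs_self _
        _ ≤ ‖f i‖ * ‖y‖ := (f i).le_opNorm y
        _ = 1 := by rw [hf1 i, hy1]; ring
    have := hxy i; linarith
  have hfy : ∀ i, 1 - 2*ε₀ ≤ f i y := by
    intro i
    have h1 : f i (x i) + f i y = ‖x i + y‖ := by
      rw [← map_add]; exact hf2 i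
    have h2 : f i (x i) ≤ 1 := by
      calc f i (x i) ≤ ‖f i (x i)‖ := le_abs_self _
        _ ≤ ‖f i‖ * ‖x i‖ := (f i).le_opNorm _
        _ = 1 := by rw [hf1 i, hx i]; ring
    have := hxy i; linarith
  have hgx : ∀ i, 1 - 2*ε₀ ≤ g i (x i) := by
    intro i
    have h1 : g i (x i) - g i y = ‖x i - y‖ := by
      rw [← map_sub]; exact hg2 i
    have h2 : -(g i y) ≤ 1 := by
      calc -(g i y) ≤ ‖g i y‖ := neg_le_abs _
        _ ≤ ‖g i‖ * ‖y‖ := (g i).le_opNorm y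
        _ = 1 := by rw [hg1 i, hy1]; ring
    have := hxy' i; linarith
  have hgy : ∀ i, g i y ≤ -(1 - 2*ε₀) := by
    intro i
    have h1 : g i (x i) - g i y = ‖x i - y‖ := by
      rw [← map_sub]; exact hg2 i
    have h2 : g i (x i) ≤ 1 := by
      calc g i (x i) ≤ ‖g i (x i)‖ := le_abs_self _
        _ ≤ ‖g i‖ * ‖x i‖ := (g i).le_opNorm _
        _ = 1 := by rw [hg1 i, hx i]; ring
    have := hxy' i; linarith
  have hslice : ∀ i, 1 - α i < 1 - 2*ε₀ := by
    intro i
    have : m ≤ α i := Finset.inf'_le _ (Finset.mem_univ i)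
    nlinarith
  have hF : (∑ i, lam i • f i) ∈ S := ⟨f, fun i => ⟨le_of_eq (hf1 i),
    lt_of_lt_of_le (hslice i) (hfx i)⟩, rfl⟩
  have hG : (∑ i, lam i • g i) ∈ S := ⟨g, fun i => ⟨le_of_eq (hg1 i),
    lt_of_lt_of_le (hslice i) (hgx i)⟩, rfl⟩
  -- distance
  have hdist : 2 - 4*ε₀ ≤ dist (∑ i, lam i • f i) (∑ i, lam i • g i) := by
    rw [dist_eq_norm]
    have happ : ((∑ i, lam i • f i) - (∑ i, lam i • g i)) y
        = ∑ i, lam i * (f i y - g i y) := by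
      simp [ContinuousLinearMap.sub_apply, ContinuousLinearMap.sum_apply,
        ContinuousLinearMap.smul_apply, mul_sub, Finset.sum_sub_distrib]
    have hb : ∑ i, lam i * (f i y - g i y) ≥ ∑ i, lam i * (2 - 4*ε₀) := by
      refine Finset.sum_le_sum fun i _ => ?_
      have := hfy i; have := hgy i
      nlinarith [hlam i]
    have hs : ∑ i, lam i * (2 - 4*ε₀) = 2 - 4*ε₀ := by
      rw [← Finset.sum_mul, hsum, one_mul]
    have hup : ((∑ i, lam i • f i) - (∑ i, lam i • g i)) y
        ≤ ‖(∑ i, lam i • f i) - (∑ i, lam i • g i)‖ := by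
      calc ((∑ i, lam i • f i) - (∑ i, lam i • g i)) y
          ≤ ‖((∑ i, lam i • f i) - (∑ i, lam i • g i)) y‖ := le_abs_self _
        _ ≤ ‖(∑ i, lam i • f i) - (∑ i, lam i • g i)‖ * ‖y‖ :=
            ContinuousLinearMap.le_opNorm _ _
        _ = ‖(∑ i, lam i • f i) - (∑ i, lam i • g i)‖ := by rw [hy1, mul_one]
    rw [happ] at hup
    linarith [hs ▸ hb]
  have := Metric.dist_le_diam_of_mem hbdd hF hG
  linarith


theorem stmt_9 (X : Type*) [NormedAddCommGroup X] [NormedSpace ℝ X] [CompleteSpace X] [Nontrivial X] :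
    WStarStrongDiameterTwoProp X ↔ Octahedral X :=
  ⟨sd2p_to_oct X, oct_to_sd2p X⟩
end
end
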